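/- arXiv:math/9907099 — 7 statements merged into one kernel-verified Lean document; each statement's English description precedes it below -/
import Mathlib

section
/- Let r(a,b,c) be the general skew-symmetric element of S⊗S. If the 15 parameters satisfy the 19 Schrödinger bialgebra equations, then the Schouten bracket of r(a,b,c) equals [[r,r]] = (a3*a6 + b3*b6 - a3*b1 - a1*b3 - c2^2) K∧M∧P. -/
open TensorProduct

noncomputable section

variable (L : Type) [LieRing L] [LieAlgebra ℝ L]

/-- The wedge X∧Y = X⊗Y - Y⊗X in S⊗S. -/
def wedge (X Y : L) : L ⊗[ℝ] L := X ⊗ₜ[ℝ] Y - Y ⊗ₜ[ℝ] X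

/-- The adjoint action of X on S⊗S: X·r = (ad_X⊗id + id⊗ad_X)(r). -/
def act (X : L) : (L ⊗[ℝ] L) →ₗ[ℝ] (L ⊗[ℝ] L) :=
  LinearMap.rTensor L (LieAlgebra.ad ℝ L X) + LinearMap.lTensor L (LieAlgebra.ad ℝ L X)

/-- S∧S: the span of wedges, i.e. the skew-symmetric part of S⊗S. -/
def skewPart : Submodule ℝ (L ⊗[ℝ] L) :=
  Submodule.span ℝ {w | ∃ X Y : L, w = wedge L X Y}

/-- 1-cocycle condition. -/
def IsCocycle (δ : L → L ⊗[ℝ] L) : Prop :=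
  ∀ X Y : L, δ ⁅X, Y⁆ = act L X (δ Y) - act L Y (δ X)

/-- The coboundary cocommutator δ_r(X) = X·r, as a linear map. -/
def cobdry (r : L ⊗[ℝ] L) : L →ₗ[ℝ] L ⊗[ℝ] L where
  toFun X := act L X r
  map_add' X Y := by
    have h : LieAlgebra.ad ℝ L (X + Y) = LieAlgebra.ad ℝ L X + LieAlgebra.ad ℝ L Y :=
      map_add _ _ _
    simp only [act, h, LinearMap.rTensor_add, LinearMap.lTensor_add, LinearMap.add_apply]
    abel
  map_smul' c X := by
    have h : LieAlgebra.ad ℝ L (c • X) = c • LieAlgebra.ad ℝ L X := map_smul _ _ _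
    simp only [act, h, LinearMap.rTensor_smul, LinearMap.lTensor_smul, LinearMap.add_apply,
      LinearMap.smul_apply, RingHom.id_apply, smul_add]

/-- The cyclic permutation ζ : x⊗y⊗z ↦ z⊗x⊗y on (S⊗S)⊗S. -/
def zeta : ((L ⊗[ℝ] L) ⊗[ℝ] L) →ₗ[ℝ] ((L ⊗[ℝ] L) ⊗[ℝ] L) :=
  ((TensorProduct.assoc ℝ L L L).symm.toLinearMap).comp
    ((TensorProduct.comm ℝ (L ⊗[ℝ] L) L).toLinearMap)

/-- The co-Jacobi identity for a linear map δ : S → S⊗S. -/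
def CoJacobi (δ : L →ₗ[ℝ] L ⊗[ℝ] L) : Prop :=
  ∀ X : L,
    ((LinearMap.id : ((L ⊗[ℝ] L) ⊗[ℝ] L) →ₗ[ℝ] ((L ⊗[ℝ] L) ⊗[ℝ] L)) + zeta L +
      zeta L ∘ₗ zeta L) (LinearMap.rTensor L δ (δ X)) = 0

/-- A Lie bialgebra cocommutator: skew-symmetric-valued 1-cocycle satisfying co-Jacobi. -/
def IsBialgCocomm (δ : L →ₗ[ℝ] L ⊗[ℝ] L) : Prop :=
  (∀ X : L, δ X ∈ skewPart L) ∧ IsCocycle L ⇑δ ∧ CoJacobi L δ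

/-- The general 15-parameter skew-symmetric element r(a,b,c) of S⊗S. -/
def rGen (D H P K C M : L) (a1 a2 a3 a4 a5 a6 b1 b2 b3 b4 b5 b6 c1 c2 c3 : ℝ) :
    L ⊗[ℝ] L :=
  a1 • wedge L D P + a2 • wedge L D H + a3 • wedge L P M + a4 • wedge L H M +
    a5 • wedge L P H + a6 • wedge L P C + b1 • wedge L D K + b2 • wedge L D C +
    b3 • wedge L K M + b4 • wedge L C M + b5 • wedge L K C + b6 • wedge L K H +
    c1 • wedge L D M + c2 • wedge L P K + c3 • wedge L H C

/-- The 19 Schrödinger bialgebra equations. -/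
def Eqs19 (a1 a2 a3 a4 a5 a6 b1 b2 b3 b4 b5 b6 c1 c2 c3 : ℝ) : Prop :=
  a6^2 + a6*b1 - 3*a1*b5 + b5*b6 = 0 ∧
  a2*a3 - 2*a1*a4 - a4*b6 - 3*a5*c1 + a5*c2 = 0 ∧
  a1*a2 + a2*b6 - a5*c3 = 0 ∧
  a5*b1 - a1*b6 - 2*a2*c1 - a4*c3 = 0 ∧
  a4*a6 + a4*b1 - a2*b3 - a5*b4 + a1*c1 - a1*c2 = 0 ∧
  3*a1*b2 - a2*b5 + a6*c3 + b1*c3 = 0 ∧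
  a3*b2 + 2*a1*b4 - a4*b5 + a6*c1 + a6*c2 + b3*c3 = 0 ∧
  3*a2*b5 + b2*b6 - a6*c3 = 0 ∧
  b6^2 + b6*a1 - 3*b1*a5 + a5*a6 = 0 ∧
  b2*b3 - 2*b1*b4 - b4*a6 - 3*b5*c1 - b5*c2 = 0 ∧
  b1*b2 + b2*a6 + b5*c3 = 0 ∧
  b5*a1 - b1*a6 - 2*b2*c1 + b4*c3 = 0 ∧
  b4*b6 + b4*a1 - b2*a3 - b5*a4 + b1*c1 + b1*c2 = 0 ∧
  3*b1*a2 - b2*a5 - b6*c3 - a1*c3 = 0 ∧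
  b3*a2 + 2*b1*a4 - b4*a5 + b6*c1 - b6*c2 - a3*c3 = 0 ∧
  3*b2*a5 + a2*a6 + b6*c3 = 0 ∧
  4*a2*b2 + c3^2 = 0 ∧
  2*a4*b2 + 2*a2*b4 + a5*b5 - a6*b6 = 0 ∧
  2*a1*b1 - a1*a6 - b1*b6 + a5*b5 - a6*b6 = 0

/-- Full antisymmetrization X∧Y∧Z in (S⊗S)⊗S. -/
def wedge3 (X Y Z : L) : (L ⊗[ℝ] L) ⊗[ℝ] L :=
  (X ⊗ₜ[ℝ] Y) ⊗ₜ[ℝ] Z - (X ⊗ₜ[ℝ] Z) ⊗ₜ[ℝ] Y - (Y ⊗ₜ[ℝ] X) ⊗ₜ[ℝ] Z +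
    (Y ⊗ₜ[ℝ] Z) ⊗ₜ[ℝ] X + (Z ⊗ₜ[ℝ] X) ⊗ₜ[ℝ] Y - (Z ⊗ₜ[ℝ] Y) ⊗ₜ[ℝ] X

/-- The Schouten bracket [[r,r]], written in coordinates w.r.t. a basis. -/
def schouten (B : Module.Basis (Fin 6) ℝ L) (r : L ⊗[ℝ] L) : (L ⊗[ℝ] L) ⊗[ℝ] L :=
  ∑ i : Fin 6, ∑ j : Fin 6, ∑ k : Fin 6, ∑ l : Fin 6,
    (((B.tensorProduct B).repr r (i, j)) * ((B.tensorProduct B).repr r (k, l))) •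
      ((⁅B i, B k⁆ ⊗ₜ[ℝ] B j) ⊗ₜ[ℝ] B l + (B i ⊗ₜ[ℝ] ⁅B j, B k⁆) ⊗ₜ[ℝ] B l +
        (B i ⊗ₜ[ℝ] B k) ⊗ₜ[ℝ] ⁅B j, B l⁆)

/-- The adjoint-invariant elements of S⊗S. -/
def invariants : Submodule ℝ (L ⊗[ℝ] L) where
  carrier := {η | ∀ X : L, act L X η = 0}
  add_mem' := by
    intro a b ha hb X
    simp [map_add, ha X, hb X]
  zero_mem' := by intro X; simp
  smul_mem' := by
    intro c a ha X
    simp [map_smul, ha X]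

/-- The space of skew-symmetric-valued 1-cocycles on S. -/
def cocycleSpace : Submodule ℝ (L →ₗ[ℝ] (L ⊗[ℝ] L)) where
  carrier := {δ | (∀ X : L, δ X ∈ skewPart L) ∧ IsCocycle L ⇑δ}
  add_mem' := by
    rintro a b ⟨ha1, ha2⟩ ⟨hb1, hb2⟩
    refine ⟨fun X => add_mem (ha1 X) (hb1 X), fun X Y => ?_⟩
    simp only [LinearMap.add_apply, ha2 X Y, hb2 X Y, map_add]
    abel
  zero_mem' := by
    refine ⟨fun X => zero_mem _, fun X Y => ?_⟩
    simp
  smul_mem' := by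
    rintro c a ⟨ha1, ha2⟩
    refine ⟨fun X => Submodule.smul_mem _ c (ha1 X), fun X Y => ?_⟩
    simp only [LinearMap.smul_apply, ha2 X Y, map_smul, smul_sub]

end

set_option maxHeartbeats 0 in
theorem statement2 (L : Type) [LieRing L] [LieAlgebra ℝ L]
    (D H P K C M : L) (B : Module.Basis (Fin 6) ℝ L)
    (hB : ⇑B = ![D, H, P, K, C, M])
    (hDP : ⁅D, P⁆ = -P) (hDK : ⁅D, K⁆ = K) (hKP : ⁅K, P⁆ = M)
    (hDH : ⁅D, H⁆ = (-2 : ℝ) • H) (hDC : ⁅D, C⁆ = (2 : ℝ) • C) (hHC : ⁅H, C⁆ = D)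
    (hKH : ⁅K, H⁆ = P) (hPC : ⁅P, C⁆ = -K) (hKC : ⁅K, C⁆ = 0) (hPH : ⁅P, H⁆ = 0)
    (hM : ∀ X : L, ⁅M, X⁆ = 0)
    (a1 a2 a3 a4 a5 a6 b1 b2 b3 b4 b5 b6 c1 c2 c3 : ℝ) (heq : Eqs19 a1 a2 a3 a4 a5 a6 b1 b2 b3 b4 b5 b6 c1 c2 c3) :
    schouten L B (rGen L D H P K C M a1 a2 a3 a4 a5 a6 b1 b2 b3 b4 b5 b6 c1 c2 c3) =
      (a3*a6 + b3*b6 - a3*b1 - a1*b3 - c2^2) • wedge3 L K M P := by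
  
  obtain ⟨q1,q2,q3,q4,q5,q6,q7,q8,q9,q10,q11,q12,q13,q14,q15,q16,q17,q18,q19⟩ := heq
  have eD : D = B 0 := by rw [hB]; rfl
  have eH : H = B 1 := by rw [hB]; rfl
  have eP : P = B 2 := by rw [hB]; rfl
  have eK : K = B 3 := by rw [hB]; rfl
  have eC : C = B 4 := by rw [hB]; rfl
  have eM : M = B 5 := by rw [hB]; rfl
  have hw : ∀ (x y : Fin 6) (p : Fin 6 × Fin 6), (B.tensorProduct B).repr (wedge L (B x) (B y)) p
      = (if p = (x, y) then 1 else 0) - (if p = (y, x) then 1 else 0) := by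
    intro x y p
    simp [wedge, ← Module.Basis.tensorProduct_apply, Finsupp.single_apply, eq_comm]
  have hr : ∀ p : Fin 6 × Fin 6, (B.tensorProduct B).repr (rGen L D H P K C M a1 a2 a3 a4 a5 a6 b1 b2 b3 b4 b5 b6 c1 c2 c3) p
      = a1 * ((if p = (0,2) then 1 else 0) - (if p = (2,0) then 1 else 0))
      + a2 * ((if p = (0,1) then 1 else 0) - (if p = (1,0) then 1 else 0))
      + a3 * ((if p = (2,5) then 1 else 0) - (if p = (5,2) then 1 else 0))
      + a4 * ((if p = (1,5) then 1 else 0) - (if p = (5,1) then 1 else 0))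
      + a5 * ((if p = (2,1) then 1 else 0) - (if p = (1,2) then 1 else 0))
      + a6 * ((if p = (2,4) then 1 else 0) - (if p = (4,2) then 1 else 0))
      + b1 * ((if p = (0,3) then 1 else 0) - (if p = (3,0) then 1 else 0))
      + b2 * ((if p = (0,4) then 1 else 0) - (if p = (4,0) then 1 else 0))
      + b3 * ((if p = (3,5) then 1 else 0) - (if p = (5,3) then 1 else 0))
      + b4 * ((if p = (4,5) then 1 else 0) - (if p = (5,4) then 1 else 0))
      + b5 * ((if p = (3,4) then 1 else 0) - (if p = (4,3) then 1 else 0))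
      + b6 * ((if p = (3,1) then 1 else 0) - (if p = (1,3) then 1 else 0))
      + c1 * ((if p = (0,5) then 1 else 0) - (if p = (5,0) then 1 else 0))
      + c2 * ((if p = (2,3) then 1 else 0) - (if p = (3,2) then 1 else 0))
      + c3 * ((if p = (1,4) then 1 else 0) - (if p = (4,1) then 1 else 0)) := by
    intro p
    simp only [rGen, eD, eH, eP, eK, eC, eM, map_add, map_smul, Finsupp.coe_add, Finsupp.coe_smul,
      Pi.add_apply, Pi.smul_apply, smul_eq_mul, hw]
  have h00 : (B.tensorProduct B).repr (rGen L D H P K C M a1 a2 a3 a4 a5 a6 b1 b2 b3 b4 b5 b6 c1 c2 c3) ((0 : Fin 6), (0 : Fin 6)) = 0 := by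
    rw [hr]; simp [Prod.ext_iff]
  have h01 : (B.tensorProduct B).repr (rGen L D H P K C M a1 a2 a3 a4 a5 a6 b1 b2 b3 b4 b5 b6 c1 c2 c3) ((0 : Fin 6), (1 : Fin 6)) = a2 := by
    rw [hr]; simp [Prod.ext_iff]
  have h02 : (B.tensorProduct B).repr (rGen L D H P K C M a1 a2 a3 a4 a5 a6 b1 b2 b3 b4 b5 b6 c1 c2 c3) ((0 : Fin 6), (2 : Fin 6)) = a1 := by
    rw [hr]; simp [Prod.ext_iff]
  have h03 : (B.tensorProduct B).repr (rGen L D H P K C M a1 a2 a3 a4 a5 a6 b1 b2 b3 b4 b5 b6 c1 c2 c3) ((0 : Fin 6), (3 : Fin 6)) = b1 := by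
    rw [hr]; simp [Prod.ext_iff]
  have h04 : (B.tensorProduct B).repr (rGen L D H P K C M a1 a2 a3 a4 a5 a6 b1 b2 b3 b4 b5 b6 c1 c2 c3) ((0 : Fin 6), (4 : Fin 6)) = b2 := by
    rw [hr]; simp [Prod.ext_iff]
  have h05 : (B.tensorProduct B).repr (rGen L D H P K C M a1 a2 a3 a4 a5 a6 b1 b2 b3 b4 b5 b6 c1 c2 c3) ((0 : Fin 6), (5 : Fin 6)) = c1 := by
    rw [hr]; simp [Prod.ext_iff]
  have h10 : (B.tensorProduct B).repr (rGen L D H P K C M a1 a2 a3 a4 a5 a6 b1 b2 b3 b4 b5 b6 c1 c2 c3) ((1 : Fin 6), (0 : Fin 6)) = -a2 := by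
    rw [hr]; simp [Prod.ext_iff]
  have h11 : (B.tensorProduct B).repr (rGen L D H P K C M a1 a2 a3 a4 a5 a6 b1 b2 b3 b4 b5 b6 c1 c2 c3) ((1 : Fin 6), (1 : Fin 6)) = 0 := by
    rw [hr]; simp [Prod.ext_iff]
  have h12 : (B.tensorProduct B).repr (rGen L D H P K C M a1 a2 a3 a4 a5 a6 b1 b2 b3 b4 b5 b6 c1 c2 c3) ((1 : Fin 6), (2 : Fin 6)) = -a5 := by
    rw [hr]; simp [Prod.ext_iff]
  have h13 : (B.tensorProduct B).repr (rGen L D H P K C M a1 a2 a3 a4 a5 a6 b1 b2 b3 b4 b5 b6 c1 c2 c3) ((1 : Fin 6), (3 : Fin 6)) = -b6 := by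
    rw [hr]; simp [Prod.ext_iff]
  have h14 : (B.tensorProduct B).repr (rGen L D H P K C M a1 a2 a3 a4 a5 a6 b1 b2 b3 b4 b5 b6 c1 c2 c3) ((1 : Fin 6), (4 : Fin 6)) = c3 := by
    rw [hr]; simp [Prod.ext_iff]
  have h15 : (B.tensorProduct B).repr (rGen L D H P K C M a1 a2 a3 a4 a5 a6 b1 b2 b3 b4 b5 b6 c1 c2 c3) ((1 : Fin 6), (5 : Fin 6)) = a4 := by
    rw [hr]; simp [Prod.ext_iff]
  have h20 : (B.tensorProduct B).repr (rGen L D H P K C M a1 a2 a3 a4 a5 a6 b1 b2 b3 b4 b5 b6 c1 c2 c3) ((2 : Fin 6), (0 : Fin 6)) = -a1 := by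
    rw [hr]; simp [Prod.ext_iff]
  have h21 : (B.tensorProduct B).repr (rGen L D H P K C M a1 a2 a3 a4 a5 a6 b1 b2 b3 b4 b5 b6 c1 c2 c3) ((2 : Fin 6), (1 : Fin 6)) = a5 := by
    rw [hr]; simp [Prod.ext_iff]
  have h22 : (B.tensorProduct B).repr (rGen L D H P K C M a1 a2 a3 a4 a5 a6 b1 b2 b3 b4 b5 b6 c1 c2 c3) ((2 : Fin 6), (2 : Fin 6)) = 0 := by
    rw [hr]; simp [Prod.ext_iff]
  have h23 : (B.tensorProduct B).repr (rGen L D H P K C M a1 a2 a3 a4 a5 a6 b1 b2 b3 b4 b5 b6 c1 c2 c3) ((2 : Fin 6), (3 : Fin 6)) = c2 := by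
    rw [hr]; simp [Prod.ext_iff]
  have h24 : (B.tensorProduct B).repr (rGen L D H P K C M a1 a2 a3 a4 a5 a6 b1 b2 b3 b4 b5 b6 c1 c2 c3) ((2 : Fin 6), (4 : Fin 6)) = a6 := by
    rw [hr]; simp [Prod.ext_iff]
  have h25 : (B.tensorProduct B).repr (rGen L D H P K C M a1 a2 a3 a4 a5 a6 b1 b2 b3 b4 b5 b6 c1 c2 c3) ((2 : Fin 6), (5 : Fin 6)) = a3 := by
    rw [hr]; simp [Prod.ext_iff]
  have h30 : (B.tensorProduct B).repr (rGen L D H P K C M a1 a2 a3 a4 a5 a6 b1 b2 b3 b4 b5 b6 c1 c2 c3) ((3 : Fin 6), (0 : Fin 6)) = -b1 := by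
    rw [hr]; simp [Prod.ext_iff]
  have h31 : (B.tensorProduct B).repr (rGen L D H P K C M a1 a2 a3 a4 a5 a6 b1 b2 b3 b4 b5 b6 c1 c2 c3) ((3 : Fin 6), (1 : Fin 6)) = b6 := by
    rw [hr]; simp [Prod.ext_iff]
  have h32 : (B.tensorProduct B).repr (rGen L D H P K C M a1 a2 a3 a4 a5 a6 b1 b2 b3 b4 b5 b6 c1 c2 c3) ((3 : Fin 6), (2 : Fin 6)) = -c2 := by
    rw [hr]; simp [Prod.ext_iff]
  have h33 : (B.tensorProduct B).repr (rGen L D H P K C M a1 a2 a3 a4 a5 a6 b1 b2 b3 b4 b5 b6 c1 c2 c3) ((3 : Fin 6), (3 : Fin 6)) = 0 := by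
    rw [hr]; simp [Prod.ext_iff]
  have h34 : (B.tensorProduct B).repr (rGen L D H P K C M a1 a2 a3 a4 a5 a6 b1 b2 b3 b4 b5 b6 c1 c2 c3) ((3 : Fin 6), (4 : Fin 6)) = b5 := by
    rw [hr]; simp [Prod.ext_iff]
  have h35 : (B.tensorProduct B).repr (rGen L D H P K C M a1 a2 a3 a4 a5 a6 b1 b2 b3 b4 b5 b6 c1 c2 c3) ((3 : Fin 6), (5 : Fin 6)) = b3 := by
    rw [hr]; simp [Prod.ext_iff]
  have h40 : (B.tensorProduct B).repr (rGen L D H P K C M a1 a2 a3 a4 a5 a6 b1 b2 b3 b4 b5 b6 c1 c2 c3) ((4 : Fin 6), (0 : Fin 6)) = -b2 := by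
    rw [hr]; simp [Prod.ext_iff]
  have h41 : (B.tensorProduct B).repr (rGen L D H P K C M a1 a2 a3 a4 a5 a6 b1 b2 b3 b4 b5 b6 c1 c2 c3) ((4 : Fin 6), (1 : Fin 6)) = -c3 := by
    rw [hr]; simp [Prod.ext_iff]
  have h42 : (B.tensorProduct B).repr (rGen L D H P K C M a1 a2 a3 a4 a5 a6 b1 b2 b3 b4 b5 b6 c1 c2 c3) ((4 : Fin 6), (2 : Fin 6)) = -a6 := by
    rw [hr]; simp [Prod.ext_iff]
  have h43 : (B.tensorProduct B).repr (rGen L D H P K C M a1 a2 a3 a4 a5 a6 b1 b2 b3 b4 b5 b6 c1 c2 c3) ((4 : Fin 6), (3 : Fin 6)) = -b5 := by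
    rw [hr]; simp [Prod.ext_iff]
  have h44 : (B.tensorProduct B).repr (rGen L D H P K C M a1 a2 a3 a4 a5 a6 b1 b2 b3 b4 b5 b6 c1 c2 c3) ((4 : Fin 6), (4 : Fin 6)) = 0 := by
    rw [hr]; simp [Prod.ext_iff]
  have h45 : (B.tensorProduct B).repr (rGen L D H P K C M a1 a2 a3 a4 a5 a6 b1 b2 b3 b4 b5 b6 c1 c2 c3) ((4 : Fin 6), (5 : Fin 6)) = b4 := by
    rw [hr]; simp [Prod.ext_iff]
  have h50 : (B.tensorProduct B).repr (rGen L D H P K C M a1 a2 a3 a4 a5 a6 b1 b2 b3 b4 b5 b6 c1 c2 c3) ((5 : Fin 6), (0 : Fin 6)) = -c1 := by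
    rw [hr]; simp [Prod.ext_iff]
  have h51 : (B.tensorProduct B).repr (rGen L D H P K C M a1 a2 a3 a4 a5 a6 b1 b2 b3 b4 b5 b6 c1 c2 c3) ((5 : Fin 6), (1 : Fin 6)) = -a4 := by
    rw [hr]; simp [Prod.ext_iff]
  have h52 : (B.tensorProduct B).repr (rGen L D H P K C M a1 a2 a3 a4 a5 a6 b1 b2 b3 b4 b5 b6 c1 c2 c3) ((5 : Fin 6), (2 : Fin 6)) = -a3 := by
    rw [hr]; simp [Prod.ext_iff]
  have h53 : (B.tensorProduct B).repr (rGen L D H P K C M a1 a2 a3 a4 a5 a6 b1 b2 b3 b4 b5 b6 c1 c2 c3) ((5 : Fin 6), (3 : Fin 6)) = -b3 := by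
    rw [hr]; simp [Prod.ext_iff]
  have h54 : (B.tensorProduct B).repr (rGen L D H P K C M a1 a2 a3 a4 a5 a6 b1 b2 b3 b4 b5 b6 c1 c2 c3) ((5 : Fin 6), (4 : Fin 6)) = -b4 := by
    rw [hr]; simp [Prod.ext_iff]
  have h55 : (B.tensorProduct B).repr (rGen L D H P K C M a1 a2 a3 a4 a5 a6 b1 b2 b3 b4 b5 b6 c1 c2 c3) ((5 : Fin 6), (5 : Fin 6)) = 0 := by
    rw [hr]; simp [Prod.ext_iff]
  have hPD : ⁅P,D⁆ = P := by rw [← lie_skew, hDP]; simp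
  have hHD : ⁅H,D⁆ = (2:ℝ) • H := by rw [← lie_skew, hDH]; simp
  have hCD : ⁅C,D⁆ = (-2:ℝ) • C := by rw [← lie_skew, hDC]; simp
  have hKD : ⁅K,D⁆ = -K := by rw [← lie_skew, hDK]
  have hCH : ⁅C,H⁆ = -D := by rw [← lie_skew, hHC]
  have hHK : ⁅H,K⁆ = -P := by rw [← lie_skew, hKH]
  have hCP : ⁅C,P⁆ = K := by rw [← lie_skew, hPC]; simp
  have hPK : ⁅P,K⁆ = -M := by rw [← lie_skew, hKP]
  have hCK : ⁅C,K⁆ = 0 := by rw [← lie_skew, hKC]; simp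
  have hHP : ⁅H,P⁆ = 0 := by rw [← lie_skew, hPH]; simp
  have hM2 : ∀ X : L, ⁅X, M⁆ = 0 := fun X => by rw [← lie_skew, hM]; simp
  have eD' : B 0 = D := eD.symm
  have eH' : B 1 = H := eH.symm
  have eP' : B 2 = P := eP.symm
  have eK' : B 3 = K := eK.symm
  have eC' : B 4 = C := eC.symm
  have eM' : B 5 = M := eM.symm
  rw [schouten]
  simp only [Fin.sum_univ_six, h00, h01, h02, h03, h04, h05, h10, h11, h12, h13, h14, h15, h20, h21, h22, h23, h24, h25, h30, h31, h32, h33, h34, h35, h40, h41, h42, h43, h44, h45, h50, h51, h52, h53, h54, h55, zero_mul, mul_zero, zero_smul, zero_add, add_zero]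
  simp only [eD', eH', eP', eK', eC', eM']
  simp only [hDP, hDK, hKP, hDH, hDC, hHC, hKH, hPC, hKC, hPH, hM, hM2,
    hPD, hHD, hCD, hKD, hCH, hHK, hCP, hPK, hCK, hHP, lie_self]
  simp only [wedge3, smul_neg, neg_tmul, tmul_neg, tmul_smul, ← smul_tmul', smul_zero,
    zero_tmul, tmul_zero, smul_add, smul_sub, neg_neg, smul_smul, add_zero, zero_add]
  match_scalars
  · ring
  · linear_combination 1 * q3
  · linear_combination 1 * q14
  · ring
  · linear_combination 1 * q17
  · ring
  · linear_combination (-1) * q4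
  · ring
  · ring
  · ring
  · ring
  · ring
  · ring
  · linear_combination (-1) * q3
  · linear_combination (-1) * q3
  · ring
  · linear_combination (-1) * q9
  · ring
  · linear_combination 1 * q16
  · ring
  · linear_combination (-1) * q2
  · linear_combination (-1) * q14
  · linear_combination (-1) * q14
  · ring
  · linear_combination 1 * q9
  · linear_combination 1 * q8
  · linear_combination 1 * q6
  · ring
  · linear_combination 1 * q15
  · linear_combination 1 * q5
  · linear_combination (-1) * q17
  · linear_combination (-1) * q17
  · ring
  · ring
  · linear_combination (-1) * q16
  · linear_combination (-1) * q8
  · ring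
  · linear_combination (-1) * q6
  · linear_combination 1 * q18
  · ring
  · linear_combination 1 * q4
  · linear_combination (-1) * q5
  · ring
  · linear_combination 1 * q19
  · linear_combination 1 * q3
  · ring
  · linear_combination 1 * q9
  · linear_combination (-1) * q16
  · linear_combination 1 * q2
  · ring
  · ring
  · ring
  · ring
  · ring
  · linear_combination (-1) * q19
  · linear_combination (-1) * q19
  · linear_combination (-1) * q9
  · ring
  · linear_combination (-1) * q1
  · linear_combination (-1) * q12
  · ring
  · ring
  · ring
  · linear_combination (-1) * q6
  · linear_combination 1 * q16
  · ring
  · linear_combination 1 * q1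
  · linear_combination 1 * q12
  · linear_combination 1 * q7
  · linear_combination (-1) * q13
  · linear_combination 1 * q13
  · linear_combination 1 * q11
  · linear_combination 1 * q14
  · linear_combination (-1) * q9
  · ring
  · linear_combination (-1) * q8
  · linear_combination (-1) * q15
  · linear_combination 1 * q19
  · linear_combination 1 * q9
  · ring
  · linear_combination 1 * q1
  · ring
  · ring
  · ring
  · ring
  · ring
  · ring
  · linear_combination (-1) * q11
  · linear_combination (-1) * q11
  · linear_combination 1 * q8
  · linear_combination (-1) * q1
  · ring
  · linear_combination (-1) * q10
  · ring
  · linear_combination 1 * q17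
  · linear_combination 1 * q16
  · linear_combination 1 * q8
  · ring
  · ring
  · linear_combination (-1) * q18
  · linear_combination 1 * q6
  · linear_combination (-1) * q16
  · linear_combination (-1) * q1
  · ring
  · linear_combination (-1) * q7
  · linear_combination 1 * q11
  · linear_combination (-1) * q8
  · linear_combination 1 * q1
  · ring
  · linear_combination 1 * q10
  · ring
  · ring
  · ring
  · ring
  · ring
  · ring
  · linear_combination (-1) * q4
  · linear_combination (-1) * q2
  · linear_combination 1 * q15
  · linear_combination 1 * q18
  · ring
  · linear_combination 1 * q5
  · linear_combination 1 * q2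
  · ring
  · linear_combination 1 * q7
  · ring
  · linear_combination (-1) * q13
  · linear_combination (-1) * q15
  · ring
  · linear_combination (-1) * q10
  · ring
  · linear_combination 1 * q12
  · linear_combination (-1) * q18
  · linear_combination (-1) * q7
  · linear_combination 1 * q10
  · ring
  · ring
  · linear_combination (-1) * q3
  · linear_combination (-1) * q14
  · linear_combination (-1) * q17
  · linear_combination 1 * q4
  · ring
  · ring
  · linear_combination 1 * q3
  · ring
  · ring
  · linear_combination (-1) * q6
  · linear_combination (-1) * q5
  · ring
  · ring
  · ring
  · ring
  · ring
  · ring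
  · ring
  · linear_combination (-1) * q19
  · ring
  · ring
  · linear_combination (-1) * q4
  · linear_combination 1 * q5
  · linear_combination 1 * q12
  · ring
  · ring
  · linear_combination 1 * q14
  · linear_combination 1 * q19
  · ring
  · linear_combination 1 * q13
  · linear_combination 1 * q4
  · ring
  · linear_combination 1 * q2
  · linear_combination (-1) * q18
  · ring
  · ring
  · linear_combination 1 * q13
  · linear_combination 1 * q15
  · ring
  · linear_combination 1 * q10
  · ring
  · ring
  · linear_combination (-1) * q12
  · linear_combination 1 * q18
  · linear_combination 1 * q7
  · ring
  · ring
  · ring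
  · ring
  · ring
  · ring
  · ring
  · ring
  · ring
  · linear_combination (-1) * q11
  · linear_combination (-1) * q13
  · ring
  · linear_combination (-1) * q15
  · linear_combination (-1) * q5
  · linear_combination (-1) * q2
  · ring
  · linear_combination (-1) * q7
  · ring
  · linear_combination (-1) * q10
  · ring
  · linear_combination 1 * q17
  · linear_combination 1 * q6
  · linear_combination 1 * q11
  · ring
  · linear_combination (-1) * q12
  · ring
  · ring
  · ring
  · ring
  · ring
  · ring
  · ring
end

section
/- The element K∧M∧P of S⊗S⊗S is invariant under the adjoint action: for every X ∈ S, (ad_X ⊗ id ⊗ id + id ⊗ ad_X ⊗ id + id ⊗ id ⊗ ad_X)(K∧M∧P) = 0. -/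
open TensorProduct

set_option maxHeartbeats 1000000 in
theorem statement4 (L : Type) [LieRing L] [LieAlgebra ℝ L]
    (D H P K C M : L) (B : Module.Basis (Fin 6) ℝ L)
    (hB : ⇑B = ![D, H, P, K, C, M])
    (hDP : ⁅D, P⁆ = -P) (hDK : ⁅D, K⁆ = K) (hKP : ⁅K, P⁆ = M)
    (hDH : ⁅D, H⁆ = (-2 : ℝ) • H) (hDC : ⁅D, C⁆ = (2 : ℝ) • C) (hHC : ⁅H, C⁆ = D)
    (hKH : ⁅K, H⁆ = P) (hPC : ⁅P, C⁆ = -K) (hKC : ⁅K, C⁆ = 0) (hPH : ⁅P, H⁆ = 0)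
    (hM : ∀ X : L, ⁅M, X⁆ = 0) :
    ∀ X : L,
      (LinearMap.rTensor L (act L X) +
        LinearMap.lTensor (L ⊗[ℝ] L) (LieAlgebra.ad ℝ L X)) (wedge3 L K M P) = 0 := by
  have key : ∀ Y : L,
      (LinearMap.rTensor L (act L Y) +
        LinearMap.lTensor (L ⊗[ℝ] L) (LieAlgebra.ad ℝ L Y)) (wedge3 L K M P) =
      wedge3 L ⁅Y, K⁆ M P + wedge3 L K ⁅Y, M⁆ P + wedge3 L K M ⁅Y, P⁆ := by
    intro Y
    simp only [wedge3, act, LinearMap.add_apply, map_sub, map_add,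
      LinearMap.rTensor_tmul, LinearMap.lTensor_tmul, LieAlgebra.ad_apply,
      add_tmul, tmul_add, sub_tmul, tmul_sub]
    abel
  have hMc : ∀ X : L, ⁅X, M⁆ = 0 := fun X => by rw [← lie_skew, hM, neg_zero]
  have hKM : ⁅K, M⁆ = 0 := by rw [← lie_skew, hM K, neg_zero]
  have hPM : ⁅P, M⁆ = 0 := by rw [← lie_skew, hM P, neg_zero]
  have hHK : ⁅H, K⁆ = -P := by rw [← lie_skew, hKH]
  have hPK : ⁅P, K⁆ = -M := by rw [← lie_skew, hKP]
  have hCK : ⁅C, K⁆ = 0 := by rw [← lie_skew, hKC, neg_zero]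
  have hCP : ⁅C, P⁆ = K := by rw [← lie_skew, hPC, neg_neg]
  have hHP : ⁅H, P⁆ = 0 := by rw [← lie_skew, hPH, neg_zero]
  have hw0 : ∀ A E : L, wedge3 L A 0 E = 0 := by
    intro A E
    simp only [wedge3, tmul_zero, zero_tmul]
    abel
  have hw0' : ∀ A E : L, wedge3 L A E 0 = 0 := by
    intro A E
    simp only [wedge3, tmul_zero, zero_tmul]
    abel
  have hw0'' : ∀ A E : L, wedge3 L 0 A E = 0 := by
    intro A E
    simp only [wedge3, tmul_zero, zero_tmul]
    abel
  have hrep13 : ∀ A E : L, wedge3 L A E A = 0 := by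
    intro A E; simp only [wedge3]; abel
  have hrep12 : ∀ A E : L, wedge3 L A A E = 0 := by
    intro A E; simp only [wedge3]; abel
  have hrep23 : ∀ A E : L, wedge3 L A E E = 0 := by
    intro A E; simp only [wedge3]; abel
  have hwneg1 : ∀ A E F : L, wedge3 L (-A) E F = -wedge3 L A E F := by
    intro A E F; simp only [wedge3, tmul_neg, neg_tmul]; abel
  have hwneg3 : ∀ A E F : L, wedge3 L A E (-F) = -wedge3 L A E F := by
    intro A E F; simp only [wedge3, tmul_neg, neg_tmul]; abel
  have hB0 : ∀ h, B ⟨0, h⟩ = D := fun h => by rw [hB]; rfl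
  have hB1 : ∀ h, B ⟨1, h⟩ = H := fun h => by rw [hB]; rfl
  have hB2 : ∀ h, B ⟨2, h⟩ = P := fun h => by rw [hB]; rfl
  have hB3 : ∀ h, B ⟨3, h⟩ = K := fun h => by rw [hB]; rfl
  have hB4 : ∀ h, B ⟨4, h⟩ = C := fun h => by rw [hB]; rfl
  have hB5 : ∀ h, B ⟨5, h⟩ = M := fun h => by rw [hB]; rfl
  have hbasis : ∀ i : Fin 6,
      (LinearMap.rTensor L (act L (B i)) +
        LinearMap.lTensor (L ⊗[ℝ] L) (LieAlgebra.ad ℝ L (B i))) (wedge3 L K M P) = 0 := by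
    intro i
    fin_cases i
    · rw [key, hB0, hDK, hMc D, hDP, hw0, hwneg3]; abel
    · rw [key, hB1, hHK, hMc H, hHP, hw0, hw0', hwneg1, hrep13]; simp
    · rw [key, hB2, hPK, hMc P, lie_self, hw0, hw0', hwneg1, hrep12]; simp
    · rw [key, hB3, lie_self, hMc K, hKP, hw0, hw0'', hrep23]; abel
    · rw [key, hB4, hCK, hMc C, hCP, hw0, hw0'', hrep13]; abel
    · rw [key, hB5, hM, hM, hM, hw0, hw0', hw0'']; abel
  intro X
  let N : L →ₗ[ℝ] (L ⊗[ℝ] L) ⊗[ℝ] L :=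
    { toFun := fun X => (LinearMap.rTensor L (act L X) +
        LinearMap.lTensor (L ⊗[ℝ] L) (LieAlgebra.ad ℝ L X)) (wedge3 L K M P)
      map_add' := by
        intro X Y
        have h : LieAlgebra.ad ℝ L (X + Y) = LieAlgebra.ad ℝ L X + LieAlgebra.ad ℝ L Y :=
          map_add _ _ _
        have h2 : act L (X + Y) = act L X + act L Y := by
          simp only [act, h, LinearMap.rTensor_add, LinearMap.lTensor_add]
          abel
        simp only [h, h2, LinearMap.rTensor_add, LinearMap.lTensor_add, LinearMap.add_apply]
        abel
      map_smul' := by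
        intro c X
        have h : LieAlgebra.ad ℝ L (c • X) = c • LieAlgebra.ad ℝ L X := map_smul _ _ _
        have h2 : act L (c • X) = c • act L X := by
          simp only [act, h, LinearMap.rTensor_smul, LinearMap.lTensor_smul, smul_add]
        simp only [h, h2, LinearMap.rTensor_smul, LinearMap.lTensor_smul, LinearMap.add_apply,
          LinearMap.smul_apply, RingHom.id_apply, smul_add] }
  show N X = 0
  have hzero : N = 0 := Module.Basis.ext B (fun i => hbasis i)
  rw [hzero]; rfl
end

section
/- The space of adjoint-invariant elements of S⊗S, namely {η ∈ S⊗S : X·η = 0 for all X ∈ S}, is one-dimensional and spanned by M⊗M. -/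
open TensorProduct

def wDvec : Fin 6 → ℝ := ![0,-2,-1,1,2,0]

lemma wDvec0 : wDvec 0 = 0 := rfl
lemma wDvec1 : wDvec 1 = -2 := rfl
lemma wDvec2 : wDvec 2 = -1 := rfl
lemma wDvec3 : wDvec 3 = 1 := rfl
lemma wDvec4 : wDvec 4 = 2 := rfl
lemma wDvec5 : wDvec 5 = 0 := rfl

theorem statement5 (L : Type) [LieRing L] [LieAlgebra ℝ L]
    (D H P K C M : L) (B : Module.Basis (Fin 6) ℝ L)
    (hB : ⇑B = ![D, H, P, K, C, M])
    (hDP : ⁅D, P⁆ = -P) (hDK : ⁅D, K⁆ = K) (hKP : ⁅K, P⁆ = M)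
    (hDH : ⁅D, H⁆ = (-2 : ℝ) • H) (hDC : ⁅D, C⁆ = (2 : ℝ) • C) (hHC : ⁅H, C⁆ = D)
    (hKH : ⁅K, H⁆ = P) (hPC : ⁅P, C⁆ = -K) (hKC : ⁅K, C⁆ = 0) (hPH : ⁅P, H⁆ = 0)
    (hM : ∀ X : L, ⁅M, X⁆ = 0) :
    invariants L = Submodule.span ℝ {(M ⊗ₜ[ℝ] M : L ⊗[ℝ] L)} ∧
    Module.finrank ℝ ↥(invariants L) = 1 := by
  have hMX : ∀ X : L, ⁅X, M⁆ = 0 := fun X => by rw [← lie_skew, hM X, neg_zero]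
  have act_tmul : ∀ X x y : L, act L X (x ⊗ₜ[ℝ] y) = ⁅X, x⁆ ⊗ₜ[ℝ] y + x ⊗ₜ[ℝ] ⁅X, y⁆ := by
    intro X x y
    simp [act, LinearMap.add_apply, LinearMap.rTensor_tmul, LinearMap.lTensor_tmul,
      LieAlgebra.ad_apply]
  have hMMinv : (M ⊗ₜ[ℝ] M : L ⊗[ℝ] L) ∈ invariants L := by
    intro X
    rw [act_tmul, hMX X]
    simp
  -- derived brackets
  have hKD : ⁅K, D⁆ = -K := by rw [← lie_skew, hDK]
  have hKK : ⁅K, K⁆ = (0 : L) := lie_self K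
  have hKM : ⁅K, M⁆ = (0 : L) := hMX K
  have hHD : ⁅H, D⁆ = (2 : ℝ) • H := by rw [← lie_skew, hDH, neg_smul, neg_neg]
  have hHK : ⁅H, K⁆ = -P := by rw [← lie_skew, hKH]
  have hHP : ⁅H, P⁆ = (0 : L) := by rw [← lie_skew, hPH, neg_zero]
  have hHH : ⁅H, H⁆ = (0 : L) := lie_self H
  have hHM : ⁅H, M⁆ = (0 : L) := hMX H
  -- basis of the tensor square
  set T : Module.Basis (Fin 6 × Fin 6) ℝ (L ⊗[ℝ] L) := B.tensorProduct B with hTdef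
  have hTe : ∀ i j : Fin 6, T (i, j) = (![D,H,P,K,C,M] i) ⊗ₜ[ℝ] (![D,H,P,K,C,M] j) := by
    intro i j
    rw [hTdef, Module.Basis.tensorProduct_apply, hB]
  have hT00 : T (0,0) = D ⊗ₜ[ℝ] D := by rw [hTe]; rfl
  have hT05 : T (0,5) = D ⊗ₜ[ℝ] M := by rw [hTe]; rfl
  have hT50 : T (5,0) = M ⊗ₜ[ℝ] D := by rw [hTe]; rfl
  have hT55 : T (5,5) = M ⊗ₜ[ℝ] M := by rw [hTe]; rfl
  have hT14 : T (1,4) = H ⊗ₜ[ℝ] C := by rw [hTe]; rfl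
  have hT41 : T (4,1) = C ⊗ₜ[ℝ] H := by rw [hTe]; rfl
  have hT23 : T (2,3) = P ⊗ₜ[ℝ] K := by rw [hTe]; rfl
  have hT32 : T (3,2) = K ⊗ₜ[ℝ] P := by rw [hTe]; rfl
  have hT30 : T (3,0) = K ⊗ₜ[ℝ] D := by rw [hTe]; rfl
  have hT03 : T (0,3) = D ⊗ₜ[ℝ] K := by rw [hTe]; rfl
  have hT35 : T (3,5) = K ⊗ₜ[ℝ] M := by rw [hTe]; rfl
  have hT53 : T (5,3) = M ⊗ₜ[ℝ] K := by rw [hTe]; rfl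
  have hT24 : T (2,4) = P ⊗ₜ[ℝ] C := by rw [hTe]; rfl
  have hT42 : T (4,2) = C ⊗ₜ[ℝ] P := by rw [hTe]; rfl
  have hT10 : T (1,0) = H ⊗ₜ[ℝ] D := by rw [hTe]; rfl
  have hT01 : T (0,1) = D ⊗ₜ[ℝ] H := by rw [hTe]; rfl
  have hT15 : T (1,5) = H ⊗ₜ[ℝ] M := by rw [hTe]; rfl
  have hT51 : T (5,1) = M ⊗ₜ[ℝ] H := by rw [hTe]; rfl
  have hT22 : T (2,2) = P ⊗ₜ[ℝ] P := by rw [hTe]; rfl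
  -- action of D is diagonal
  have adD : ∀ i : Fin 6, ⁅D, B i⁆ = wDvec i • B i := by
    intro i
    rw [hB]
    fin_cases i
    · show ⁅D, D⁆ = (0:ℝ) • D
      rw [lie_self, zero_smul]
    · show ⁅D, H⁆ = (-2:ℝ) • H
      exact hDH
    · show ⁅D, P⁆ = (-1:ℝ) • P
      rw [hDP, neg_smul, one_smul]
    · show ⁅D, K⁆ = (1:ℝ) • K
      rw [hDK, one_smul]
    · show ⁅D, C⁆ = (2:ℝ) • C
      exact hDC
    · show ⁅D, M⁆ = (0:ℝ) • M
      rw [hMX D, zero_smul]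
  have actD : ∀ p : Fin 6 × Fin 6, act L D (T p) = (wDvec p.1 + wDvec p.2) • T p := by
    rintro ⟨i, j⟩
    rw [hTdef, Module.Basis.tensorProduct_apply, act_tmul, adD, adD,
      ← TensorProduct.smul_tmul', TensorProduct.tmul_smul, ← add_smul]
  have hspan : invariants L = Submodule.span ℝ {(M ⊗ₜ[ℝ] M : L ⊗[ℝ] L)} := by
    apply le_antisymm
    · intro η hη
      have hη' : ∀ X : L, act L X η = 0 := hη
      have hDsum : act L D η = ∑ p : Fin 6 × Fin 6, ((wDvec p.1 + wDvec p.2) * T.repr η p) • T p := by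
        conv_lhs => rw [← Module.Basis.sum_repr T η]
        rw [map_sum]
        refine Finset.sum_congr rfl fun p _ => ?_
        rw [map_smul, actD p, smul_smul, mul_comm]
      have hD0 : ∀ p : Fin 6 × Fin 6, (wDvec p.1 + wDvec p.2) * T.repr η p = 0 :=
        Fintype.linearIndependent_iff.mp T.linearIndependent _ (by rw [← hDsum, hη' D])
      have hczgen : ∀ i j : Fin 6, wDvec i + wDvec j ≠ 0 → T.repr η (i, j) = 0 :=
        fun i j h => (mul_eq_zero.mp (hD0 (i, j))).resolve_left h
      have cz01 : T.repr η (0,1) = 0 := hczgen 0 1 (by norm_num [wDvec0, wDvec1, wDvec2, wDvec3, wDvec4, wDvec5])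
      have cz02 : T.repr η (0,2) = 0 := hczgen 0 2 (by norm_num [wDvec0, wDvec1, wDvec2, wDvec3, wDvec4, wDvec5])
      have cz03 : T.repr η (0,3) = 0 := hczgen 0 3 (by norm_num [wDvec0, wDvec1, wDvec2, wDvec3, wDvec4, wDvec5])
      have cz04 : T.repr η (0,4) = 0 := hczgen 0 4 (by norm_num [wDvec0, wDvec1, wDvec2, wDvec3, wDvec4, wDvec5])
      have cz10 : T.repr η (1,0) = 0 := hczgen 1 0 (by norm_num [wDvec0, wDvec1, wDvec2, wDvec3, wDvec4, wDvec5])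
      have cz11 : T.repr η (1,1) = 0 := hczgen 1 1 (by norm_num [wDvec0, wDvec1, wDvec2, wDvec3, wDvec4, wDvec5])
      have cz12 : T.repr η (1,2) = 0 := hczgen 1 2 (by norm_num [wDvec0, wDvec1, wDvec2, wDvec3, wDvec4, wDvec5])
      have cz13 : T.repr η (1,3) = 0 := hczgen 1 3 (by norm_num [wDvec0, wDvec1, wDvec2, wDvec3, wDvec4, wDvec5])
      have cz15 : T.repr η (1,5) = 0 := hczgen 1 5 (by norm_num [wDvec0, wDvec1, wDvec2, wDvec3, wDvec4, wDvec5])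
      have cz20 : T.repr η (2,0) = 0 := hczgen 2 0 (by norm_num [wDvec0, wDvec1, wDvec2, wDvec3, wDvec4, wDvec5])
      have cz21 : T.repr η (2,1) = 0 := hczgen 2 1 (by norm_num [wDvec0, wDvec1, wDvec2, wDvec3, wDvec4, wDvec5])
      have cz22 : T.repr η (2,2) = 0 := hczgen 2 2 (by norm_num [wDvec0, wDvec1, wDvec2, wDvec3, wDvec4, wDvec5])
      have cz24 : T.repr η (2,4) = 0 := hczgen 2 4 (by norm_num [wDvec0, wDvec1, wDvec2, wDvec3, wDvec4, wDvec5])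
      have cz25 : T.repr η (2,5) = 0 := hczgen 2 5 (by norm_num [wDvec0, wDvec1, wDvec2, wDvec3, wDvec4, wDvec5])
      have cz30 : T.repr η (3,0) = 0 := hczgen 3 0 (by norm_num [wDvec0, wDvec1, wDvec2, wDvec3, wDvec4, wDvec5])
      have cz31 : T.repr η (3,1) = 0 := hczgen 3 1 (by norm_num [wDvec0, wDvec1, wDvec2, wDvec3, wDvec4, wDvec5])
      have cz33 : T.repr η (3,3) = 0 := hczgen 3 3 (by norm_num [wDvec0, wDvec1, wDvec2, wDvec3, wDvec4, wDvec5])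
      have cz34 : T.repr η (3,4) = 0 := hczgen 3 4 (by norm_num [wDvec0, wDvec1, wDvec2, wDvec3, wDvec4, wDvec5])
      have cz35 : T.repr η (3,5) = 0 := hczgen 3 5 (by norm_num [wDvec0, wDvec1, wDvec2, wDvec3, wDvec4, wDvec5])
      have cz40 : T.repr η (4,0) = 0 := hczgen 4 0 (by norm_num [wDvec0, wDvec1, wDvec2, wDvec3, wDvec4, wDvec5])
      have cz42 : T.repr η (4,2) = 0 := hczgen 4 2 (by norm_num [wDvec0, wDvec1, wDvec2, wDvec3, wDvec4, wDvec5])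
      have cz43 : T.repr η (4,3) = 0 := hczgen 4 3 (by norm_num [wDvec0, wDvec1, wDvec2, wDvec3, wDvec4, wDvec5])
      have cz44 : T.repr η (4,4) = 0 := hczgen 4 4 (by norm_num [wDvec0, wDvec1, wDvec2, wDvec3, wDvec4, wDvec5])
      have cz45 : T.repr η (4,5) = 0 := hczgen 4 5 (by norm_num [wDvec0, wDvec1, wDvec2, wDvec3, wDvec4, wDvec5])
      have cz51 : T.repr η (5,1) = 0 := hczgen 5 1 (by norm_num [wDvec0, wDvec1, wDvec2, wDvec3, wDvec4, wDvec5])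
      have cz52 : T.repr η (5,2) = 0 := hczgen 5 2 (by norm_num [wDvec0, wDvec1, wDvec2, wDvec3, wDvec4, wDvec5])
      have cz53 : T.repr η (5,3) = 0 := hczgen 5 3 (by norm_num [wDvec0, wDvec1, wDvec2, wDvec3, wDvec4, wDvec5])
      have cz54 : T.repr η (5,4) = 0 := hczgen 5 4 (by norm_num [wDvec0, wDvec1, wDvec2, wDvec3, wDvec4, wDvec5])
      have hsum := Module.Basis.sum_repr T η
      rw [Fintype.sum_prod_type] at hsum
      simp only [Fin.sum_univ_six] at hsum
      rw [cz01, cz02, cz03, cz04, cz10, cz11, cz12, cz13, cz15, cz20, cz21, cz22, cz24, cz25,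
        cz30, cz31, cz33, cz34, cz35, cz40, cz42, cz43, cz44, cz45, cz51, cz52, cz53, cz54] at hsum
      simp only [zero_smul, add_zero, zero_add] at hsum
      -- action of K on the surviving basis tensors
      have aK00 : act L K (T (0,0)) = -T (3,0) - T (0,3) := by
        rw [hT00, hT30, hT03, act_tmul, hKD, TensorProduct.neg_tmul, TensorProduct.tmul_neg]
        abel
      have aK05 : act L K (T (0,5)) = -T (3,5) := by
        rw [hT05, hT35, act_tmul, hKD, hKM, TensorProduct.neg_tmul, TensorProduct.tmul_zero,
          add_zero]
      have aK50 : act L K (T (5,0)) = -T (5,3) := by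
        rw [hT50, hT53, act_tmul, hKD, hKM, TensorProduct.tmul_neg, TensorProduct.zero_tmul,
          zero_add]
      have aK14 : act L K (T (1,4)) = T (2,4) := by
        rw [hT14, hT24, act_tmul, hKH, hKC, TensorProduct.tmul_zero, add_zero]
      have aK41 : act L K (T (4,1)) = T (4,2) := by
        rw [hT41, hT42, act_tmul, hKH, hKC, TensorProduct.zero_tmul, zero_add]
      have aK23 : act L K (T (2,3)) = T (5,3) := by
        rw [hT23, hT53, act_tmul, hKP, hKK, TensorProduct.tmul_zero, add_zero]
      have aK32 : act L K (T (3,2)) = T (3,5) := by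
        rw [hT32, hT35, act_tmul, hKP, hKK, TensorProduct.zero_tmul, zero_add]
      have aK55 : act L K (T (5,5)) = 0 := by
        rw [hT55, act_tmul, hKM, TensorProduct.zero_tmul, TensorProduct.tmul_zero, add_zero]
      -- action of H on the surviving basis tensors
      have aH00 : act L H (T (0,0)) = (2:ℝ) • T (1,0) + (2:ℝ) • T (0,1) := by
        rw [hT00, hT10, hT01, act_tmul, hHD, TensorProduct.smul_tmul', TensorProduct.tmul_smul]
      have aH05 : act L H (T (0,5)) = (2:ℝ) • T (1,5) := by
        rw [hT05, hT15, act_tmul, hHD, hHM, TensorProduct.smul_tmul', TensorProduct.tmul_zero,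
          add_zero]
      have aH50 : act L H (T (5,0)) = (2:ℝ) • T (5,1) := by
        rw [hT50, hT51, act_tmul, hHD, hHM, TensorProduct.tmul_smul, TensorProduct.zero_tmul,
          zero_add]
      have aH14 : act L H (T (1,4)) = T (1,0) := by
        rw [hT14, hT10, act_tmul, hHH, hHC, TensorProduct.zero_tmul, zero_add]
      have aH41 : act L H (T (4,1)) = T (0,1) := by
        rw [hT41, hT01, act_tmul, hHH, hHC, TensorProduct.tmul_zero, add_zero]
      have aH23 : act L H (T (2,3)) = -T (2,2) := by
        rw [hT23, hT22, act_tmul, hHP, hHK, TensorProduct.zero_tmul, TensorProduct.tmul_neg,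
          zero_add]
      have aH32 : act L H (T (3,2)) = -T (2,2) := by
        rw [hT32, hT22, act_tmul, hHP, hHK, TensorProduct.tmul_zero, TensorProduct.neg_tmul,
          add_zero]
      have aH55 : act L H (T (5,5)) = 0 := by
        rw [hT55, act_tmul, hHM, TensorProduct.zero_tmul, TensorProduct.tmul_zero, add_zero]
      have hKbig := hη' K
      conv at hKbig => lhs; rw [← hsum]
      simp only [map_add, map_smul, aK00, aK05, aK14, aK23, aK32, aK41, aK50, aK55,
        smul_zero] at hKbig
      have hHbig := hη' H
      conv at hHbig => lhs; rw [← hsum]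
      simp only [map_add, map_smul, aH00, aH05, aH14, aH23, aH32, aH41, aH50, aH55,
        smul_zero] at hHbig
      -- extract coefficient equations
      have eqrep : ∀ (v : L ⊗[ℝ] L), v = 0 → ∀ q : Fin 6 × Fin 6, T.repr v q = 0 := by
        intro v hv q; rw [hv, map_zero]; rfl
      have e1 := eqrep _ hKbig (3,0)
      have e2 := eqrep _ hKbig (2,4)
      have e3 := eqrep _ hKbig (4,2)
      have e4 := eqrep _ hKbig (3,5)
      have e5 := eqrep _ hKbig (5,3)
      have e6 := eqrep _ hHbig (1,5)
      have e7 := eqrep _ hHbig (5,1)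
      simp only [map_add, map_smul, map_neg, map_sub, map_zero, smul_zero, Module.Basis.repr_self,
        Finsupp.add_apply, Finsupp.smul_apply, Finsupp.neg_apply, Finsupp.sub_apply,
        Finsupp.zero_apply, Finsupp.single_apply, smul_eq_mul, Prod.mk.injEq] at e1 e2 e3 e4 e5 e6 e7
      simp at e1 e2 e3 e4 e5 e6 e7
      have c05z : T.repr η (0,5) = 0 := by linarith
      have c50z : T.repr η (5,0) = 0 := by linarith
      have c00z : T.repr η (0,0) = 0 := e1
      have c14z : T.repr η (1,4) = 0 := by linarith
      have c41z : T.repr η (4,1) = 0 := by linarith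
      have c23z : T.repr η (2,3) = 0 := by linarith
      have c32z : T.repr η (3,2) = 0 := by linarith
      rw [c00z, c05z, c50z, c14z, c41z, c23z, c32z] at hsum
      simp only [zero_smul, add_zero, zero_add] at hsum
      rw [Submodule.mem_span_singleton]
      exact ⟨T.repr η (5,5), by rw [← hT55]; exact hsum⟩
    · rw [Submodule.span_le, Set.singleton_subset_iff]
      exact hMMinv
  refine ⟨hspan, ?_⟩
  rw [hspan]
  have hne : (M ⊗ₜ[ℝ] M : L ⊗[ℝ] L) ≠ 0 := by
    have hnz := Module.Basis.ne_zero (B.tensorProduct B) (5,5)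
    rw [Module.Basis.tensorProduct_apply, hB] at hnz
    exact hnz
  exact finrank_span_singleton hne
end

section
/- For the general skew-symmetric element r = r(a,b,c) (with no constraints on the 15 parameters), the coboundary cocommutator δ_r is given by: δ_r(D) = -a1 D∧P - 2a2 D∧H - a3 P∧M - 2a4 H∧M - 3a5 P∧H + a6 P∧C + b1 D∧K + 2b2 D∧C + b3 K∧M + 2b4 C∧M + 3b5 K∧C - b6 K∧H; δ_r(P) = (a6-b1) K∧P - a2 H∧P - b1 D∧M - b2(C∧P + D∧K) - b4 K∧M + b5 C∧M + b6 H∧M + (c1-c2) P∧M + c3 K∧H; δ_r(K) = (a1-b6) P∧K + b2 C∧K + a1 D∧M + a2(H∧K + D∧P) + a4 P∧M - a5 H∧M - a6 C∧M - (c1+c2) K∧M + c3 P∧C; δ_r(H) = -(2a1+b6) P∧H - (a6+b1) D∧P - 2b1 K∧H - 2b2 C∧H - b3 P∧M + b4 D∧M - b5(D∧K + P∧C) + 2c1 H∧M - c3 D∧H; δ_r(C) = (2b1+a6) K∧C + (b6+a1) D∧K + 2a1 P∧C + 2a2 H∧C + a3 K∧M - a4 D∧M + a5(D∧P + K∧H)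 - 2c1 C∧M - c3 D∧C; δ_r(M) = 0. -/
open TensorProduct

lemma act_tmul (L : Type) [LieRing L] [LieAlgebra ℝ L] (X Y Z : L) :
    act L X (Y ⊗ₜ[ℝ] Z) = ⁅X,Y⁆ ⊗ₜ[ℝ] Z + Y ⊗ₜ[ℝ] ⁅X,Z⁆ := by
  simp [act, LieAlgebra.ad_apply]

theorem statement7 (L : Type) [LieRing L] [LieAlgebra ℝ L]
    (D H P K C M : L) (B : Module.Basis (Fin 6) ℝ L)
    (hB : ⇑B = ![D, H, P, K, C, M])
    (hDP : ⁅D, P⁆ = -P) (hDK : ⁅D, K⁆ = K) (hKP : ⁅K, P⁆ = M)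
    (hDH : ⁅D, H⁆ = (-2 : ℝ) • H) (hDC : ⁅D, C⁆ = (2 : ℝ) • C) (hHC : ⁅H, C⁆ = D)
    (hKH : ⁅K, H⁆ = P) (hPC : ⁅P, C⁆ = -K) (hKC : ⁅K, C⁆ = 0) (hPH : ⁅P, H⁆ = 0)
    (hM : ∀ X : L, ⁅M, X⁆ = 0)
    (a1 a2 a3 a4 a5 a6 b1 b2 b3 b4 b5 b6 c1 c2 c3 : ℝ) (r : L ⊗[ℝ] L) (hr : r = rGen L D H P K C M a1 a2 a3 a4 a5 a6 b1 b2 b3 b4 b5 b6 c1 c2 c3) :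
    cobdry L r D = -(a1 • wedge L D P) - (2*a2) • wedge L D H - a3 • wedge L P M -
        (2*a4) • wedge L H M - (3*a5) • wedge L P H + a6 • wedge L P C + b1 • wedge L D K +
        (2*b2) • wedge L D C + b3 • wedge L K M + (2*b4) • wedge L C M + (3*b5) • wedge L K C -
        b6 • wedge L K H ∧
    cobdry L r P = (a6 - b1) • wedge L K P - a2 • wedge L H P - b1 • wedge L D M -
        b2 • (wedge L C P + wedge L D K) - b4 • wedge L K M + b5 • wedge L C M +
        b6 • wedge L H M + (c1 - c2) • wedge L P M + c3 • wedge L K H ∧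
    cobdry L r K = (a1 - b6) • wedge L P K + b2 • wedge L C K + a1 • wedge L D M +
        a2 • (wedge L H K + wedge L D P) + a4 • wedge L P M - a5 • wedge L H M -
        a6 • wedge L C M - (c1 + c2) • wedge L K M + c3 • wedge L P C ∧
    cobdry L r H = -((2*a1 + b6) • wedge L P H) - (a6 + b1) • wedge L D P -
        (2*b1) • wedge L K H - (2*b2) • wedge L C H - b3 • wedge L P M + b4 • wedge L D M -
        b5 • (wedge L D K + wedge L P C) + (2*c1) • wedge L H M - c3 • wedge L D H ∧
    cobdry L r C = (2*b1 + a6) • wedge L K C + (b6 + a1) • wedge L D K +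
        (2*a1) • wedge L P C + (2*a2) • wedge L H C + a3 • wedge L K M - a4 • wedge L D M +
        a5 • (wedge L D P + wedge L K H) - (2*c1) • wedge L C M - c3 • wedge L D C ∧
    cobdry L r M = 0 := by
  have hPD : ⁅P, D⁆ = P := by rw [← lie_skew, hDP]; simp
  have hHD : ⁅H, D⁆ = (2:ℝ) • H := by rw [← lie_skew, hDH]; simp
  have hKD : ⁅K, D⁆ = -K := by rw [← lie_skew, hDK]
  have hCD : ⁅C, D⁆ = (-2:ℝ) • C := by rw [← lie_skew, hDC]; simp [neg_smul]
  have hPK : ⁅P, K⁆ = -M := by rw [← lie_skew, hKP]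
  have hHK : ⁅H, K⁆ = -P := by rw [← lie_skew, hKH]
  have hCP : ⁅C, P⁆ = K := by rw [← lie_skew, hPC]; simp
  have hCH : ⁅C, H⁆ = -D := by rw [← lie_skew, hHC]
  have hHP : ⁅H, P⁆ = 0 := by rw [← lie_skew, hPH]; simp
  have hCK : ⁅C, K⁆ = 0 := by rw [← lie_skew, hKC]; simp
  have hM' : ∀ X : L, ⁅X, M⁆ = 0 := fun X => by rw [← lie_skew, hM]; simp
  subst hr
  refine ⟨?_, ?_, ?_, ?_, ?_, ?_⟩ <;>
  · simp only [cobdry, rGen, wedge, LinearMap.coe_mk, AddHom.coe_mk, map_add, map_smul,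
      map_sub, act_tmul, hDP, hDK, hKP, hDH, hDC, hHC, hKH, hPC, hKC, hPH, hM, hPD, hHD,
      hKD, hCD, hPK, hHK, hCP, hCH, hHP, hCK, hM', lie_self, ← TensorProduct.smul_tmul', tmul_smul,
      neg_tmul, tmul_neg, tmul_zero, zero_tmul]
    module
end

section
/- The linear map O: S → S determined by O(D) = -D, O(P) = -K, O(K) = -P, O(M) = -M, O(H) = -C, O(C) = -H is a Lie algebra automorphism of S. Moreover, (O ⊗ O)(r(a,b,c)) = r(a',b',c') where a'_i = b_i and b'_i = a_i for i = 1,...,6, c1' = c1, c2' = -c2, c3' = -c3. -/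
open TensorProduct

theorem statement8 (L : Type) [LieRing L] [LieAlgebra ℝ L]
    (D H P K C M : L) (B : Module.Basis (Fin 6) ℝ L)
    (hB : ⇑B = ![D, H, P, K, C, M])
    (hDP : ⁅D, P⁆ = -P) (hDK : ⁅D, K⁆ = K) (hKP : ⁅K, P⁆ = M)
    (hDH : ⁅D, H⁆ = (-2 : ℝ) • H) (hDC : ⁅D, C⁆ = (2 : ℝ) • C) (hHC : ⁅H, C⁆ = D)
    (hKH : ⁅K, H⁆ = P) (hPC : ⁅P, C⁆ = -K) (hKC : ⁅K, C⁆ = 0) (hPH : ⁅P, H⁆ = 0)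
    (hM : ∀ X : L, ⁅M, X⁆ = 0)
    (a1 a2 a3 a4 a5 a6 b1 b2 b3 b4 b5 b6 c1 c2 c3 : ℝ) (O : L →ₗ[ℝ] L)
    (hOD : O D = -D) (hOP : O P = -K) (hOK : O K = -P) (hOM : O M = -M)
    (hOH : O H = -C) (hOC : O C = -H) :
    (∀ x y : L, O ⁅x, y⁆ = ⁅O x, O y⁆) ∧ Function.Bijective O ∧
      TensorProduct.map O O (rGen L D H P K C M a1 a2 a3 a4 a5 a6 b1 b2 b3 b4 b5 b6 c1 c2 c3) =
        rGen L D H P K C M b1 b2 b3 b4 b5 b6 a1 a2 a3 a4 a5 a6 c1 (-c2) (-c3) := by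
  -- derived bracket relations
  have hPD : ⁅P, D⁆ = P := by rw [← lie_skew, hDP, neg_neg]
  have hKD : ⁅K, D⁆ = -K := by rw [← lie_skew, hDK]
  have hPK : ⁅P, K⁆ = -M := by rw [← lie_skew, hKP]
  have hHD : ⁅H, D⁆ = (2 : ℝ) • H := by rw [← lie_skew, hDH]; module
  have hCD : ⁅C, D⁆ = (-2 : ℝ) • C := by rw [← lie_skew, hDC]; module
  have hCH : ⁅C, H⁆ = -D := by rw [← lie_skew, hHC]
  have hHK : ⁅H, K⁆ = -P := by rw [← lie_skew, hKH]
  have hCP : ⁅C, P⁆ = K := by rw [← lie_skew, hPC, neg_neg]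
  have hCK : ⁅C, K⁆ = 0 := by rw [← lie_skew, hKC, neg_zero]
  have hHP : ⁅H, P⁆ = 0 := by rw [← lie_skew, hPH, neg_zero]
  have hM' : ∀ X : L, ⁅X, M⁆ = 0 := fun X => by rw [← lie_skew, hM, neg_zero]
  -- multiplicativity
  have e0 : (![D, H, P, K, C, M] : Fin 6 → L) 0 = D := rfl
  have e1 : (![D, H, P, K, C, M] : Fin 6 → L) 1 = H := rfl
  have e2 : (![D, H, P, K, C, M] : Fin 6 → L) 2 = P := rfl
  have e3 : (![D, H, P, K, C, M] : Fin 6 → L) 3 = K := rfl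
  have e4 : (![D, H, P, K, C, M] : Fin 6 → L) 4 = C := rfl
  have e5 : (![D, H, P, K, C, M] : Fin 6 → L) 5 = M := rfl
  have hmul : ∀ x y : L, O ⁅x, y⁆ = ⁅O x, O y⁆ := by
    have hG : (LinearMap.llcomp ℝ L L L O) ∘ₗ (LieAlgebra.ad ℝ L : L →ₗ[ℝ] Module.End ℝ L) =
        (LinearMap.lcomp ℝ L O) ∘ₗ (LieAlgebra.ad ℝ L : L →ₗ[ℝ] Module.End ℝ L) ∘ₗ O := by
      apply B.ext; intro i
      apply B.ext; intro j
      simp only [LinearMap.comp_apply, LieHom.coe_toLinearMap, LinearMap.llcomp_apply,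
        LinearMap.lcomp_apply, LieAlgebra.ad_apply, hB]
      fin_cases i <;> fin_cases j <;>
        simp [hDP, hDK, hKP, hDH, hDC, hHC, hKH, hPC, hKC, hPH, hM, hPD, hKD, hPK, hHD,
          hCD, hCH, hHK, hCP, hCK, hHP, hM', hOD, hOP, hOK, hOM, hOH, hOC, map_smul, map_neg,
          smul_neg, e0, e1, e2, e3, e4, e5]
    intro x y
    have := LinearMap.congr_fun (LinearMap.congr_fun hG x) y
    simpa [LieAlgebra.ad_apply] using this
  -- involutivity → bijectivity
  have hOO : ∀ x : L, O (O x) = x := by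
    have h : O ∘ₗ O = LinearMap.id := by
      apply B.ext; intro i
      simp only [LinearMap.comp_apply, LinearMap.id_apply, hB]
      fin_cases i <;> simp [hOD, hOP, hOK, hOM, hOH, hOC, map_neg, e0, e1, e2, e3, e4, e5]
    intro x
    exact LinearMap.congr_fun h x
  refine ⟨hmul, Function.Involutive.bijective hOO, ?_⟩
  have hw : ∀ X Y : L, TensorProduct.map O O (wedge L X Y) = wedge L (O X) (O Y) := by
    intro X Y; simp [wedge]
  have hw' : ∀ X Y : L, wedge L (-X) (-Y) = wedge L X Y := by
    intro X Y; simp [wedge, TensorProduct.tmul_neg, TensorProduct.neg_tmul]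
  have hwneg : ∀ X Y : L, wedge L Y X = -wedge L X Y := by
    intro X Y; simp [wedge]
  simp only [rGen, map_add, map_smul, hw, hOD, hOP, hOK, hOM, hOH, hOC, hw']
  rw [hwneg K P, hwneg C H]
  module
end

section
/- Let r ∈ S∧S be skew-symmetric such that the coboundary cocommutator δ_r is a Lie bialgebra cocommutator. Then δ_r(D) = 0 if and only if r = c1 D∧M + c2 P∧K for some real c1, c2. Conversely, for any real c1, c2, the element r = c1 D∧M + c2 P∧K makes δ_r a Lie bialgebra cocommutator, with δ_r(D) = δ_r(M) = 0, δ_r(P) = (c1-c2) P∧M, δ_r(K) = -(c1+c2) K∧M, δ_r(H) = 2c1 H∧M, δ_r(C) = -2c1 C∧M. -/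
open TensorProduct

section Aux
variable (L : Type) [LieRing L] [LieAlgebra ℝ L]

lemma act_tmul_s9 (X a b : L) :
    act L X (a ⊗ₜ[ℝ] b) = ⁅X, a⁆ ⊗ₜ[ℝ] b + a ⊗ₜ[ℝ] ⁅X, b⁆ := by
  simp [act, LieAlgebra.ad_apply]

lemma act_wedge (X a b : L) :
    act L X (wedge L a b) = wedge L ⁅X, a⁆ b + wedge L a ⁅X, b⁆ := by
  simp only [wedge, map_sub, act_tmul_s9]
  abel

lemma wedge_mem_skew (a b : L) : wedge L a b ∈ skewPart L :=
  Submodule.subset_span ⟨a, b, rfl⟩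

lemma cobdry_apply (r : L ⊗[ℝ] L) (X : L) : cobdry L r X = act L X r := rfl

lemma act_lie (X Y : L) (t : L ⊗[ℝ] L) :
    act L ⁅X, Y⁆ t = act L X (act L Y t) - act L Y (act L X t) := by
  induction t using TensorProduct.induction_on with
  | zero => simp
  | tmul a b =>
      simp only [act_tmul_s9, map_add, lie_lie, sub_tmul, tmul_sub]
      abel
  | add x y hx hy =>
      simp only [map_add, hx, hy]
      abel

lemma cobdry_cocycle (r : L ⊗[ℝ] L) : IsCocycle L ⇑(cobdry L r) := by
  intro X Y
  simp only [cobdry_apply, act_lie]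

lemma act_mem_skew (X : L) (s : L ⊗[ℝ] L) (hs : s ∈ skewPart L) :
    act L X s ∈ skewPart L := by
  induction hs using Submodule.span_induction with
  | mem w hw =>
      obtain ⟨a, b, rfl⟩ := hw
      rw [act_wedge]
      exact add_mem (wedge_mem_skew L _ _) (wedge_mem_skew L _ _)
  | zero => simp
  | add x y _ _ hx hy => rw [map_add]; exact add_mem hx hy
  | smul c x _ hx => rw [map_smul]; exact Submodule.smul_mem _ _ hx

lemma zeta_tmul (x y z : L) :
    zeta L ((x ⊗ₜ[ℝ] y) ⊗ₜ[ℝ] z) = (z ⊗ₜ[ℝ] x) ⊗ₜ[ℝ] y := by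
  simp [zeta]

lemma alt3_wedge (a b : L) :
    ((LinearMap.id : ((L ⊗[ℝ] L) ⊗[ℝ] L) →ₗ[ℝ] ((L ⊗[ℝ] L) ⊗[ℝ] L)) + zeta L +
      zeta L ∘ₗ zeta L) ((wedge L a b) ⊗ₜ[ℝ] b) = 0 := by
  simp only [wedge, sub_tmul, LinearMap.add_apply, LinearMap.id_apply, LinearMap.comp_apply,
    map_sub, zeta_tmul]
  abel

lemma wedge_smul_left (c : ℝ) (a b : L) : wedge L (c • a) b = c • wedge L a b := by
  simp only [wedge, smul_sub, ← smul_tmul', tmul_smul]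

lemma wedge_smul_right (c : ℝ) (a b : L) : wedge L a (c • b) = c • wedge L a b := by
  simp only [wedge, smul_sub, ← smul_tmul', tmul_smul]

lemma wedge_neg_left (a b : L) : wedge L (-a) b = - wedge L a b := by
  simp only [wedge, neg_tmul, tmul_neg]
  abel

lemma wedge_neg_right (a b : L) : wedge L a (-b) = - wedge L a b := by
  simp only [wedge, neg_tmul, tmul_neg]
  abel

lemma wedge_zero_left (b : L) : wedge L 0 b = 0 := by simp [wedge]

lemma wedge_zero_right (a : L) : wedge L a 0 = 0 := by simp [wedge]

lemma wedge_comm (a b : L) : wedge L b a = - wedge L a b := by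
  simp only [wedge]
  abel

lemma wedge_self (a : L) : wedge L a a = 0 := by simp [wedge]

lemma rTensor_wedge (f : L →ₗ[ℝ] L ⊗[ℝ] L) (a b : L) :
    LinearMap.rTensor L f (wedge L a b) = f a ⊗ₜ[ℝ] b - f b ⊗ₜ[ℝ] a := by
  simp [wedge]

lemma sum_sum_ite {N : Type*} [AddCommMonoid N] (f : Fin 6 → Fin 6 → N) (k l : Fin 6) :
    (∑ x : Fin 6, ∑ y : Fin 6, if x = k then if y = l then f x y else 0 else 0) = f k l := by
  have h1 : ∀ x : Fin 6, (∑ y : Fin 6, if x = k then if y = l then f x y else 0 else 0)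
      = if x = k then f x l else 0 := by
    intro x
    by_cases hx : x = k <;> simp [hx]
  simp only [h1]
  simp

lemma alt_wedge_tmul (a b c : L) :
    ((LinearMap.id : ((L ⊗[ℝ] L) ⊗[ℝ] L) →ₗ[ℝ] ((L ⊗[ℝ] L) ⊗[ℝ] L)) + zeta L +
      zeta L ∘ₗ zeta L) ((wedge L a b) ⊗ₜ[ℝ] c) = wedge3 L a b c := by
  simp only [wedge, wedge3, TensorProduct.sub_tmul, map_sub, LinearMap.add_apply,
    LinearMap.id_apply, LinearMap.comp_apply, zeta_tmul]
  abel

end Aux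

set_option maxHeartbeats 2000000 in
theorem statement9 (L : Type) [LieRing L] [LieAlgebra ℝ L]
    (D H P K C M : L) (B : Module.Basis (Fin 6) ℝ L)
    (hB : ⇑B = ![D, H, P, K, C, M])
    (hDP : ⁅D, P⁆ = -P) (hDK : ⁅D, K⁆ = K) (hKP : ⁅K, P⁆ = M)
    (hDH : ⁅D, H⁆ = (-2 : ℝ) • H) (hDC : ⁅D, C⁆ = (2 : ℝ) • C) (hHC : ⁅H, C⁆ = D)
    (hKH : ⁅K, H⁆ = P) (hPC : ⁅P, C⁆ = -K) (hKC : ⁅K, C⁆ = 0) (hPH : ⁅P, H⁆ = 0)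
    (hM : ∀ X : L, ⁅M, X⁆ = 0) :
    (∀ r ∈ skewPart L, IsBialgCocomm L (cobdry L r) →
      (cobdry L r D = 0 ↔ ∃ c1 c2 : ℝ, r = c1 • wedge L D M + c2 • wedge L P K)) ∧
    (∀ c1 c2 : ℝ,
      IsBialgCocomm L (cobdry L (c1 • wedge L D M + c2 • wedge L P K)) ∧
      cobdry L (c1 • wedge L D M + c2 • wedge L P K) D = 0 ∧
      cobdry L (c1 • wedge L D M + c2 • wedge L P K) M = 0 ∧
      cobdry L (c1 • wedge L D M + c2 • wedge L P K) P = (c1 - c2) • wedge L P M ∧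
      cobdry L (c1 • wedge L D M + c2 • wedge L P K) K = -((c1 + c2) • wedge L K M) ∧
      cobdry L (c1 • wedge L D M + c2 • wedge L P K) H = (2*c1) • wedge L H M ∧
      cobdry L (c1 • wedge L D M + c2 • wedge L P K) C = -((2*c1) • wedge L C M)) := by
  -- bracket table
  have hMr : ∀ X : L, ⁅X, M⁆ = 0 := fun X => by rw [← lie_skew, hM, neg_zero]
  have bHD : ⁅H, D⁆ = (2:ℝ) • H := by rw [← lie_skew, hDH]; simp
  have bPD : ⁅P, D⁆ = P := by rw [← lie_skew, hDP, neg_neg]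
  have bKD : ⁅K, D⁆ = -K := by rw [← lie_skew, hDK]
  have bCD : ⁅C, D⁆ = -((2:ℝ) • C) := by rw [← lie_skew, hDC]
  have bHK : ⁅H, K⁆ = -P := by rw [← lie_skew, hKH]
  have bPK : ⁅P, K⁆ = -M := by rw [← lie_skew, hKP]
  have bCH : ⁅C, H⁆ = -D := by rw [← lie_skew, hHC]
  have bCP : ⁅C, P⁆ = K := by rw [← lie_skew, hPC, neg_neg]
  have bCK : ⁅C, K⁆ = 0 := by rw [← lie_skew, hKC, neg_zero]
  have bHP : ⁅H, P⁆ = 0 := by rw [← lie_skew, hPH, neg_zero]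
  have hB0 : B 0 = D := by rw [hB]; rfl
  have hB1 : B 1 = H := by rw [hB]; rfl
  have hB2 : B 2 = P := by rw [hB]; rfl
  have hB3 : B 3 = K := by rw [hB]; rfl
  have hB4 : B 4 = C := by rw [hB]; rfl
  have hB5 : B 5 = M := by rw [hB]; rfl
  -- delta values on the 3-parameter family
  have eD : ∀ c1 c2 c3 : ℝ,
      act L D (c1 • wedge L D M + c2 • wedge L P K + c3 • wedge L H C) = 0 := by
    intro c1 c2 c3
    simp only [map_add, map_smul, act_wedge, lie_self, hMr, hDP, hDK, hDH, hDC,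
      wedge_zero_left, wedge_zero_right, wedge_neg_left, wedge_neg_right, wedge_self,
      wedge_smul_left, wedge_smul_right]
    module
  have eM : ∀ c1 c2 c3 : ℝ,
      act L M (c1 • wedge L D M + c2 • wedge L P K + c3 • wedge L H C) = 0 := by
    intro c1 c2 c3
    simp only [map_add, map_smul, act_wedge, hM, hMr, wedge_zero_left, wedge_zero_right,
      smul_zero, add_zero]
  have eP : ∀ c1 c2 c3 : ℝ,
      act L P (c1 • wedge L D M + c2 • wedge L P K + c3 • wedge L H C) =
        (c1 - c2) • wedge L P M - c3 • wedge L H K := by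
    intro c1 c2 c3
    simp only [map_add, map_smul, act_wedge, bPD, hMr, lie_self, bPK, hPH, hPC,
      wedge_zero_left, wedge_zero_right, wedge_neg_left, wedge_neg_right, wedge_self,
      wedge_smul_left, wedge_smul_right]
    module
  have eK : ∀ c1 c2 c3 : ℝ,
      act L K (c1 • wedge L D M + c2 • wedge L P K + c3 • wedge L H C) =
        -((c1 + c2) • wedge L K M) + c3 • wedge L P C := by
    intro c1 c2 c3
    simp only [map_add, map_smul, act_wedge, bKD, hMr, lie_self, hKP, hKH, hKC,
      wedge_zero_left, wedge_zero_right, wedge_neg_left, wedge_neg_right, wedge_self,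
      wedge_smul_left, wedge_smul_right]
    rw [wedge_comm L M K]
    module
  have eH : ∀ c1 c2 c3 : ℝ,
      act L H (c1 • wedge L D M + c2 • wedge L P K + c3 • wedge L H C) =
        (2*c1) • wedge L H M + c3 • wedge L H D := by
    intro c1 c2 c3
    simp only [map_add, map_smul, act_wedge, bHD, hMr, lie_self, bHP, bHK, hHC,
      wedge_zero_left, wedge_zero_right, wedge_neg_left, wedge_neg_right, wedge_self,
      wedge_smul_left, wedge_smul_right]
    module
  have eC : ∀ c1 c2 c3 : ℝ,
      act L C (c1 • wedge L D M + c2 • wedge L P K + c3 • wedge L H C) =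
        -((2*c1) • wedge L C M) - c3 • wedge L D C := by
    intro c1 c2 c3
    simp only [map_add, map_smul, act_wedge, bCD, hMr, lie_self, bCP, bCK, bCH,
      wedge_zero_left, wedge_zero_right, wedge_neg_left, wedge_neg_right, wedge_self,
      wedge_smul_left, wedge_smul_right]
    rw [wedge_comm L C D]
    module
  have r0eq : ∀ c1 c2 : ℝ, c1 • wedge L D M + c2 • wedge L P K =
      c1 • wedge L D M + c2 • wedge L P K + (0:ℝ) • wedge L H C := by
    intro c1 c2; rw [zero_smul, add_zero]
  -- skew coefficients
  have skewcoef : ∀ s, s ∈ skewPart L → ∀ i j : Fin 6,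
      (B.tensorProduct B).repr s (i, j) + (B.tensorProduct B).repr s (j, i) = 0 := by
    intro s hs
    induction hs using Submodule.span_induction with
    | mem w hw =>
        obtain ⟨X, Y, rfl⟩ := hw
        intro i j
        simp only [wedge, map_sub, Finsupp.sub_apply, Module.Basis.tensorProduct_repr_tmul_apply,
          smul_eq_mul]
        ring
    | zero => intro i j; simp
    | add x y _ _ hx hy =>
        intro i j
        simp only [map_add, Finsupp.add_apply]
        have h1 := hx i j; have h2 := hy i j; linarith
    | smul c x _ hx =>
        intro i j
        simp only [map_smul, Finsupp.smul_apply, smul_eq_mul]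
        have h1 := hx i j; linear_combination c * h1
  -- bialgebra property of cobdry r0
  have hbial : ∀ c1 c2 : ℝ,
      IsBialgCocomm L (cobdry L (c1 • wedge L D M + c2 • wedge L P K)) := by
    intro c1 c2
    have hr0mem : c1 • wedge L D M + c2 • wedge L P K ∈ skewPart L :=
      add_mem (Submodule.smul_mem _ _ (wedge_mem_skew L _ _))
        (Submodule.smul_mem _ _ (wedge_mem_skew L _ _))
    refine ⟨fun X => act_mem_skew L X _ hr0mem, cobdry_cocycle L _, ?_⟩
    set δ := cobdry L (c1 • wedge L D M + c2 • wedge L P K) with hδdef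
    have hδD : δ D = 0 := by rw [hδdef, cobdry_apply, r0eq]; exact eD c1 c2 0
    have hδM : δ M = 0 := by rw [hδdef, cobdry_apply, r0eq]; exact eM c1 c2 0
    have hδP : δ P = (c1 - c2) • wedge L P M := by
      rw [hδdef, cobdry_apply, r0eq, eP c1 c2 0, zero_smul, sub_zero]
    have hδK : δ K = (-(c1 + c2)) • wedge L K M := by
      rw [hδdef, cobdry_apply, r0eq, eK c1 c2 0, zero_smul, add_zero, neg_smul]
    have hδH : δ H = (2*c1) • wedge L H M := by
      rw [hδdef, cobdry_apply, r0eq, eH c1 c2 0, zero_smul, add_zero]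
    have hδC : δ C = (-(2*c1)) • wedge L C M := by
      rw [hδdef, cobdry_apply, r0eq, eC c1 c2 0, zero_smul, sub_zero, neg_smul]
    have key : ∀ (A : L) (c : ℝ), δ A = c • wedge L A M →
        ((LinearMap.id : ((L ⊗[ℝ] L) ⊗[ℝ] L) →ₗ[ℝ] ((L ⊗[ℝ] L) ⊗[ℝ] L)) + zeta L +
          zeta L ∘ₗ zeta L) (LinearMap.rTensor L δ (δ A)) = 0 := by
      intro A c hA
      simp only [hA, map_smul, rTensor_wedge, hδM, TensorProduct.zero_tmul, sub_zero]
      rw [← TensorProduct.smul_tmul', map_smul, alt3_wedge L A M, smul_zero, smul_zero]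
    intro X
    have hF : ((LinearMap.id + zeta L + zeta L ∘ₗ zeta L) ∘ₗ
        (LinearMap.rTensor L δ) ∘ₗ δ) = 0 := by
      apply B.ext
      intro i
      simp only [LinearMap.comp_apply, LinearMap.zero_apply]
      fin_cases i
      all_goals beta_reduce
      · rw [show B ⟨0, by omega⟩ = D from hB0]; rw [hδD]; simp
      · rw [show B ⟨1, by omega⟩ = H from hB1]; exact key H (2*c1) hδH
      · rw [show B ⟨2, by omega⟩ = P from hB2]; exact key P (c1-c2) hδP
      · rw [show B ⟨3, by omega⟩ = K from hB3]; exact key K (-(c1+c2)) hδK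
      · rw [show B ⟨4, by omega⟩ = C from hB4]; exact key C (-(2*c1)) hδC
      · rw [show B ⟨5, by omega⟩ = M from hB5]; rw [hδM]; simp
    exact LinearMap.congr_fun hF X
  constructor
  · -- part 1
    intro r hr hbc
    constructor
    · intro h0
      set wt : Fin 6 → ℝ := ![0, -2, -1, 1, 2, 0] with hwt
      have hwt0 : wt 0 = 0 := by rw [hwt]; rfl
      have hwt1 : wt 1 = -2 := by rw [hwt]; rfl
      have hwt2 : wt 2 = -1 := by rw [hwt]; rfl
      have hwt3 : wt 3 = 1 := by rw [hwt]; rfl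
      have hwt4 : wt 4 = 2 := by rw [hwt]; rfl
      have hwt5 : wt 5 = 0 := by rw [hwt]; rfl
      have hw : ∀ i : Fin 6, ⁅D, B i⁆ = wt i • B i := by
        intro i
        fin_cases i <;>
          simp [hwt0, hwt1, hwt2, hwt3, hwt4, hwt5, hB0, hB1, hB2, hB3, hB4, hB5, hDH, hDP, hDK, hDC, hMr, lie_self]
      have hactD : ∀ i j : Fin 6, act L D (B i ⊗ₜ[ℝ] B j) = (wt i + wt j) • (B i ⊗ₜ[ℝ] B j) := by
        intro i j
        rw [act_tmul_s9, hw, hw, ← TensorProduct.smul_tmul', TensorProduct.tmul_smul, add_smul]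
      have hrsum : r = ∑ i : Fin 6, ∑ j : Fin 6, (B.tensorProduct B).repr r (i, j) • (B i ⊗ₜ[ℝ] B j) := by
        conv_lhs => rw [← Module.Basis.sum_repr (B.tensorProduct B) r]
        rw [Fintype.sum_prod_type]
        simp only [Module.Basis.tensorProduct_apply']
      have hact : act L D r = ∑ i : Fin 6, ∑ j : Fin 6,
          ((wt i + wt j) * (B.tensorProduct B).repr r (i, j)) • (B i ⊗ₜ[ℝ] B j) := by
        conv_lhs => rw [hrsum]
        rw [map_sum]
        refine Finset.sum_congr rfl fun i _ => ?_
        rw [map_sum]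
        refine Finset.sum_congr rfl fun j _ => ?_
        rw [map_smul, hactD, smul_smul, mul_comm]
      have hcoef : ∀ k l : Fin 6, (wt k + wt l) * (B.tensorProduct B).repr r (k, l) = 0 := by
        intro k l
        have h2 : (B.tensorProduct B).repr (act L D r) (k, l) = 0 := by
          rw [← cobdry_apply, h0]; simp
        rw [hact] at h2
        simp only [map_sum, map_smul, Finsupp.coe_finset_sum, Finset.sum_apply,
          Finsupp.coe_smul, Pi.smul_apply, Module.Basis.tensorProduct_repr_tmul_apply,
          Module.Basis.repr_self, Finsupp.single_apply, smul_eq_mul, mul_ite, mul_one, mul_zero,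
          ite_mul, zero_mul] at h2
        rwa [sum_sum_ite] at h2
      have hz : ∀ k l : Fin 6, wt k + wt l ≠ 0 → (B.tensorProduct B).repr r (k, l) = 0 := by
        intro k l hkl
        exact (mul_eq_zero.mp (hcoef k l)).resolve_left hkl
      have d01 : (B.tensorProduct B).repr r (0, 1) = 0 := hz 0 1 (by norm_num [hwt0, hwt1, hwt2, hwt3, hwt4, hwt5])
      have d02 : (B.tensorProduct B).repr r (0, 2) = 0 := hz 0 2 (by norm_num [hwt0, hwt1, hwt2, hwt3, hwt4, hwt5])
      have d03 : (B.tensorProduct B).repr r (0, 3) = 0 := hz 0 3 (by norm_num [hwt0, hwt1, hwt2, hwt3, hwt4, hwt5])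
      have d04 : (B.tensorProduct B).repr r (0, 4) = 0 := hz 0 4 (by norm_num [hwt0, hwt1, hwt2, hwt3, hwt4, hwt5])
      have d10 : (B.tensorProduct B).repr r (1, 0) = 0 := hz 1 0 (by norm_num [hwt0, hwt1, hwt2, hwt3, hwt4, hwt5])
      have d11 : (B.tensorProduct B).repr r (1, 1) = 0 := hz 1 1 (by norm_num [hwt0, hwt1, hwt2, hwt3, hwt4, hwt5])
      have d12 : (B.tensorProduct B).repr r (1, 2) = 0 := hz 1 2 (by norm_num [hwt0, hwt1, hwt2, hwt3, hwt4, hwt5])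
      have d13 : (B.tensorProduct B).repr r (1, 3) = 0 := hz 1 3 (by norm_num [hwt0, hwt1, hwt2, hwt3, hwt4, hwt5])
      have d15 : (B.tensorProduct B).repr r (1, 5) = 0 := hz 1 5 (by norm_num [hwt0, hwt1, hwt2, hwt3, hwt4, hwt5])
      have d20 : (B.tensorProduct B).repr r (2, 0) = 0 := hz 2 0 (by norm_num [hwt0, hwt1, hwt2, hwt3, hwt4, hwt5])
      have d21 : (B.tensorProduct B).repr r (2, 1) = 0 := hz 2 1 (by norm_num [hwt0, hwt1, hwt2, hwt3, hwt4, hwt5])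
      have d22 : (B.tensorProduct B).repr r (2, 2) = 0 := hz 2 2 (by norm_num [hwt0, hwt1, hwt2, hwt3, hwt4, hwt5])
      have d24 : (B.tensorProduct B).repr r (2, 4) = 0 := hz 2 4 (by norm_num [hwt0, hwt1, hwt2, hwt3, hwt4, hwt5])
      have d25 : (B.tensorProduct B).repr r (2, 5) = 0 := hz 2 5 (by norm_num [hwt0, hwt1, hwt2, hwt3, hwt4, hwt5])
      have d30 : (B.tensorProduct B).repr r (3, 0) = 0 := hz 3 0 (by norm_num [hwt0, hwt1, hwt2, hwt3, hwt4, hwt5])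
      have d31 : (B.tensorProduct B).repr r (3, 1) = 0 := hz 3 1 (by norm_num [hwt0, hwt1, hwt2, hwt3, hwt4, hwt5])
      have d33 : (B.tensorProduct B).repr r (3, 3) = 0 := hz 3 3 (by norm_num [hwt0, hwt1, hwt2, hwt3, hwt4, hwt5])
      have d34 : (B.tensorProduct B).repr r (3, 4) = 0 := hz 3 4 (by norm_num [hwt0, hwt1, hwt2, hwt3, hwt4, hwt5])
      have d35 : (B.tensorProduct B).repr r (3, 5) = 0 := hz 3 5 (by norm_num [hwt0, hwt1, hwt2, hwt3, hwt4, hwt5])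
      have d40 : (B.tensorProduct B).repr r (4, 0) = 0 := hz 4 0 (by norm_num [hwt0, hwt1, hwt2, hwt3, hwt4, hwt5])
      have d42 : (B.tensorProduct B).repr r (4, 2) = 0 := hz 4 2 (by norm_num [hwt0, hwt1, hwt2, hwt3, hwt4, hwt5])
      have d43 : (B.tensorProduct B).repr r (4, 3) = 0 := hz 4 3 (by norm_num [hwt0, hwt1, hwt2, hwt3, hwt4, hwt5])
      have d44 : (B.tensorProduct B).repr r (4, 4) = 0 := hz 4 4 (by norm_num [hwt0, hwt1, hwt2, hwt3, hwt4, hwt5])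
      have d45 : (B.tensorProduct B).repr r (4, 5) = 0 := hz 4 5 (by norm_num [hwt0, hwt1, hwt2, hwt3, hwt4, hwt5])
      have d51 : (B.tensorProduct B).repr r (5, 1) = 0 := hz 5 1 (by norm_num [hwt0, hwt1, hwt2, hwt3, hwt4, hwt5])
      have d52 : (B.tensorProduct B).repr r (5, 2) = 0 := hz 5 2 (by norm_num [hwt0, hwt1, hwt2, hwt3, hwt4, hwt5])
      have d53 : (B.tensorProduct B).repr r (5, 3) = 0 := hz 5 3 (by norm_num [hwt0, hwt1, hwt2, hwt3, hwt4, hwt5])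
      have d54 : (B.tensorProduct B).repr r (5, 4) = 0 := hz 5 4 (by norm_num [hwt0, hwt1, hwt2, hwt3, hwt4, hwt5])
      have d00 : (B.tensorProduct B).repr r (0, 0) = 0 := by have := skewcoef r hr 0 0; linarith
      have d55 : (B.tensorProduct B).repr r (5, 5) = 0 := by have := skewcoef r hr 5 5; linarith
      have a50 : (B.tensorProduct B).repr r (5, 0) = -(B.tensorProduct B).repr r (0, 5) := by
        have := skewcoef r hr 0 5; linarith
      have a32 : (B.tensorProduct B).repr r (3, 2) = -(B.tensorProduct B).repr r (2, 3) := by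
        have := skewcoef r hr 2 3; linarith
      have a41 : (B.tensorProduct B).repr r (4, 1) = -(B.tensorProduct B).repr r (1, 4) := by
        have := skewcoef r hr 1 4; linarith
      have hrw : r = (B.tensorProduct B).repr r (0, 5) • wedge L D M + (B.tensorProduct B).repr r (2, 3) • wedge L P K +
          (B.tensorProduct B).repr r (1, 4) • wedge L H C := by
        conv_lhs => rw [hrsum]
        simp only [Fin.sum_univ_six, d01, d02, d03, d04, d10, d11, d12, d13, d15, d20, d21, d22, d24, d25, d30, d31, d33, d34, d35, d40, d42, d43, d44, d45, d51, d52, d53, d54, d00, d55, a50, a32, a41,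
          hB0, hB1, hB2, hB3, hB4, hB5, zero_smul, add_zero, zero_add, neg_smul, wedge,
          smul_sub]
        abel
      -- use co-Jacobi at P to kill the H∧C term
      have hδP : cobdry L r P = ((B.tensorProduct B).repr r (0, 5) - (B.tensorProduct B).repr r (2, 3)) • wedge L P M -
          (B.tensorProduct B).repr r (1, 4) • wedge L H K := by
        rw [cobdry_apply]; conv_lhs => rw [hrw]
        exact eP _ _ _
      have hδH : cobdry L r H = (2 * (B.tensorProduct B).repr r (0, 5)) • wedge L H M +
          (B.tensorProduct B).repr r (1, 4) • wedge L H D := by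
        rw [cobdry_apply]; conv_lhs => rw [hrw]
        exact eH _ _ _
      have hδK : cobdry L r K = -(((B.tensorProduct B).repr r (0, 5) + (B.tensorProduct B).repr r (2, 3)) • wedge L K M) +
          (B.tensorProduct B).repr r (1, 4) • wedge L P C := by
        rw [cobdry_apply]; conv_lhs => rw [hrw]
        exact eK _ _ _
      have hδM : cobdry L r M = 0 := by
        rw [cobdry_apply]; conv_lhs => rw [hrw]
        exact eM _ _ _
      have hcj := hbc.2.2 P
      have hrt : ((LinearMap.id : ((L ⊗[ℝ] L) ⊗[ℝ] L) →ₗ[ℝ] ((L ⊗[ℝ] L) ⊗[ℝ] L)) + zeta L +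
          zeta L ∘ₗ zeta L) (LinearMap.rTensor L (cobdry L r) (cobdry L r P)) =
          (((B.tensorProduct B).repr r (0, 5) - (B.tensorProduct B).repr r (2, 3)) *
            ((B.tensorProduct B).repr r (0, 5) - (B.tensorProduct B).repr r (2, 3))) •
              wedge3 L P M M -
          (((B.tensorProduct B).repr r (0, 5) - (B.tensorProduct B).repr r (2, 3)) *
            (B.tensorProduct B).repr r (1, 4)) • wedge3 L H K M -
          (2 * (B.tensorProduct B).repr r (0, 5) * (B.tensorProduct B).repr r (1, 4)) •
            wedge3 L H M K -
          ((B.tensorProduct B).repr r (1, 4) * (B.tensorProduct B).repr r (1, 4)) •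
            wedge3 L H D K -
          (((B.tensorProduct B).repr r (0, 5) + (B.tensorProduct B).repr r (2, 3)) *
            (B.tensorProduct B).repr r (1, 4)) • wedge3 L K M H +
          ((B.tensorProduct B).repr r (1, 4) * (B.tensorProduct B).repr r (1, 4)) •
            wedge3 L P C H := by
        simp only [hδP, hδH, hδK, hδM, map_sub, map_smul, rTensor_wedge,
          TensorProduct.add_tmul, TensorProduct.sub_tmul, TensorProduct.neg_tmul,
          TensorProduct.zero_tmul, ← TensorProduct.smul_tmul', map_add, map_neg, map_zero,
          alt_wedge_tmul, sub_zero]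
        module
      rw [hrt] at hcj
      have q0 : ((B.tensorProduct B).tensorProduct B).repr (wedge3 L P M M) ((1, 0), 3) = 0 := by
        simp only [show P = B 2 from hB2.symm, show M = B 5 from hB5.symm, wedge3]
        simp [Module.Basis.tensorProduct_repr_tmul_apply, Finsupp.single_apply]
      have q1 : ((B.tensorProduct B).tensorProduct B).repr (wedge3 L H K M) ((1, 0), 3) = 0 := by
        simp only [show H = B 1 from hB1.symm, show K = B 3 from hB3.symm,
          show M = B 5 from hB5.symm, wedge3]
        simp [Module.Basis.tensorProduct_repr_tmul_apply, Finsupp.single_apply]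
      have q2 : ((B.tensorProduct B).tensorProduct B).repr (wedge3 L H M K) ((1, 0), 3) = 0 := by
        simp only [show H = B 1 from hB1.symm, show K = B 3 from hB3.symm,
          show M = B 5 from hB5.symm, wedge3]
        simp [Module.Basis.tensorProduct_repr_tmul_apply, Finsupp.single_apply]
      have q3 : ((B.tensorProduct B).tensorProduct B).repr (wedge3 L H D K) ((1, 0), 3) = 1 := by
        simp only [show H = B 1 from hB1.symm, show K = B 3 from hB3.symm,
          show D = B 0 from hB0.symm, wedge3]
        simp [Module.Basis.tensorProduct_repr_tmul_apply, Finsupp.single_apply]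
      have q4 : ((B.tensorProduct B).tensorProduct B).repr (wedge3 L K M H) ((1, 0), 3) = 0 := by
        simp only [show H = B 1 from hB1.symm, show K = B 3 from hB3.symm,
          show M = B 5 from hB5.symm, wedge3]
        simp [Module.Basis.tensorProduct_repr_tmul_apply, Finsupp.single_apply]
      have q5 : ((B.tensorProduct B).tensorProduct B).repr (wedge3 L P C H) ((1, 0), 3) = 0 := by
        simp only [show H = B 1 from hB1.symm, show P = B 2 from hB2.symm,
          show C = B 4 from hB4.symm, wedge3]
        simp [Module.Basis.tensorProduct_repr_tmul_apply, Finsupp.single_apply]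
      have hco := congrArg
        (fun t => ((B.tensorProduct B).tensorProduct B).repr t ((1, 0), 3)) hcj
      simp only [map_sub, map_add, map_smul, map_zero, Finsupp.sub_apply, Finsupp.add_apply,
        Finsupp.smul_apply, Finsupp.coe_zero, Pi.zero_apply, q0, q1, q2, q3, q4, q5,
        smul_eq_mul, mul_zero, mul_one, zero_sub, sub_zero, zero_add, add_zero] at hco
      have hc3 : (B.tensorProduct B).repr r (1, 4) = 0 :=
        mul_self_eq_zero.mp (neg_eq_zero.mp hco)
      refine ⟨(B.tensorProduct B).repr r (0, 5), (B.tensorProduct B).repr r (2, 3), ?_⟩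
      conv_lhs => rw [hrw]
      rw [hc3, zero_smul, add_zero]
    · rintro ⟨c1, c2, rfl⟩
      rw [cobdry_apply, r0eq]; exact eD c1 c2 0
  · -- part 2
    intro c1 c2
    refine ⟨hbial c1 c2, ?_, ?_, ?_, ?_, ?_, ?_⟩
    · rw [cobdry_apply, r0eq]; exact eD c1 c2 0
    · rw [cobdry_apply, r0eq]; exact eM c1 c2 0
    · rw [cobdry_apply, r0eq, eP c1 c2 0, zero_smul, sub_zero]
    · rw [cobdry_apply, r0eq, eK c1 c2 0, zero_smul, add_zero]
    · rw [cobdry_apply, r0eq, eH c1 c2 0, zero_smul, add_zero]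
    · rw [cobdry_apply, r0eq, eC c1 c2 0, zero_smul, sub_zero]
end

section
/- (Proposition 4.3, necessity) Let r ∈ S∧S be skew-symmetric such that the coboundary cocommutator δ_r is a Lie bialgebra cocommutator, and suppose there are reals α, ξ, ν, β1, β2, β3, β4, β5, β6 with δ_r(K) = β6 K∧P + ξ K∧M + ν P∧H + β1 P∧M + β2 H∧M, δ_r(H) = β5 K∧M - (β6+α) P∧H + β3 P∧M + (β4-ξ) H∧M, δ_r(P) = β4 P∧M + (β6+α) H∧M, and δ_r(M) = α P∧M (the general extended Galilei cocommutator on span{K,H,P,M}). Then α = ν = β5 = β6 = 0 and β2*(2β4 - ξ) = 0. -/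
open TensorProduct

set_option maxHeartbeats 4000000 in
theorem statement15 (L : Type) [LieRing L] [LieAlgebra ℝ L]
    (D H P K C M : L) (B : Module.Basis (Fin 6) ℝ L)
    (hB : ⇑B = ![D, H, P, K, C, M])
    (hDP : ⁅D, P⁆ = -P) (hDK : ⁅D, K⁆ = K) (hKP : ⁅K, P⁆ = M)
    (hDH : ⁅D, H⁆ = (-2 : ℝ) • H) (hDC : ⁅D, C⁆ = (2 : ℝ) • C) (hHC : ⁅H, C⁆ = D)
    (hKH : ⁅K, H⁆ = P) (hPC : ⁅P, C⁆ = -K) (hKC : ⁅K, C⁆ = 0) (hPH : ⁅P, H⁆ = 0)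
    (hM : ∀ X : L, ⁅M, X⁆ = 0)
    (r : L ⊗[ℝ] L) (hrs : r ∈ skewPart L) (hbi : IsBialgCocomm L (cobdry L r))
    (al xi nu be1 be2 be3 be4 be5 be6 : ℝ)
    (hdK : cobdry L r K = be6 • wedge L K P + xi • wedge L K M + nu • wedge L P H +
      be1 • wedge L P M + be2 • wedge L H M)
    (hdH : cobdry L r H = be5 • wedge L K M - (be6 + al) • wedge L P H +
      be3 • wedge L P M + (be4 - xi) • wedge L H M)
    (hdP : cobdry L r P = be4 • wedge L P M + (be6 + al) • wedge L H M)
    (hdM : cobdry L r M = al • wedge L P M) :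
    al = 0 ∧ nu = 0 ∧ be5 = 0 ∧ be6 = 0 ∧ be2*(2*be4 - xi) = 0 := by

  -- basis letters
  have hB0 : B 0 = D := by rw [show (B 0 : L) = (⇑B) 0 from rfl, hB]; rfl
  have hB1 : B 1 = H := by rw [show (B 1 : L) = (⇑B) 1 from rfl, hB]; rfl
  have hB2 : B 2 = P := by rw [show (B 2 : L) = (⇑B) 2 from rfl, hB]; rfl
  have hB3 : B 3 = K := by rw [show (B 3 : L) = (⇑B) 3 from rfl, hB]; rfl
  have hB4 : B 4 = C := by rw [show (B 4 : L) = (⇑B) 4 from rfl, hB]; rfl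
  have hB5 : B 5 = M := by rw [show (B 5 : L) = (⇑B) 5 from rfl, hB]; rfl
  have hrep : ∀ (i p : Fin 6), B.repr (B i) p = if i = p then 1 else 0 := by
    intro i p; rw [B.repr_self]; exact Finsupp.single_apply
  -- skewness of r in coordinates
  have hskew0 : ∀ z, z ∈ skewPart L → ∀ p q : Fin 6,
      ((B.tensorProduct B).repr z) (p, q) = -((B.tensorProduct B).repr z) (q, p) := by
    intro z hz
    induction hz using Submodule.span_induction with
    | mem w hw =>
      obtain ⟨X, Y, rfl⟩ := hw
      intro p q
      simp only [wedge, map_sub, Finsupp.sub_apply, Module.Basis.tensorProduct_repr_tmul_apply,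
        smul_eq_mul]
      ring
    | zero => intro p q; simp
    | add x y hx hy ihx ihy =>
      intro p q
      simp only [map_add, Finsupp.add_apply, ihx p q, ihy p q]; ring
    | smul a x hx ihx =>
      intro p q
      simp only [map_smul, Finsupp.smul_apply, ihx p q, smul_eq_mul]; ring
  set c : Fin 6 → Fin 6 → ℝ := fun i j => ((B.tensorProduct B).repr r) (i, j) with hcdef
  have hskew : ∀ p q : Fin 6, c p q = - c q p := fun p q => hskew0 r hrs p q
  have hr : r = ∑ i : Fin 6, ∑ j : Fin 6, c i j • (B i ⊗ₜ[ℝ] B j) := by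
    conv_lhs => rw [← (B.tensorProduct B).sum_repr r]
    rw [Fintype.sum_prod_type]
    simp only [Module.Basis.tensorProduct_apply, hcdef]
  have hcob : ∀ X : L, cobdry L r X = act L X r := fun X => rfl
  have hact : ∀ X : L, cobdry L r X =
      ∑ i : Fin 6, ∑ j : Fin 6, c i j • (⁅X, B i⁆ ⊗ₜ[ℝ] B j + B i ⊗ₜ[ℝ] ⁅X, B j⁆) := by
    intro X
    rw [hcob]
    conv_lhs => rw [hr]
    rw [map_sum]
    refine Finset.sum_congr rfl fun i _ => ?_
    rw [map_sum]
    refine Finset.sum_congr rfl fun j _ => ?_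
    rw [map_smul]
    congr 1
  -- coefficient functionals
  set φ : Fin 6 → Fin 6 → (L ⊗[ℝ] L) →ₗ[ℝ] ℝ := fun p q =>
    (Finsupp.lapply (p, q)).comp ((B.tensorProduct B).repr.toLinearMap) with hphdef
  have hph : ∀ (p q : Fin 6) (x y : L), φ p q (x ⊗ₜ[ℝ] y) = B.repr x p * B.repr y q := by
    intro p q x y
    simp [hphdef, Module.Basis.tensorProduct_repr_tmul_apply, mul_comm]
  set ψ : Fin 6 → Fin 6 → Fin 6 → ((L ⊗[ℝ] L) ⊗[ℝ] L) →ₗ[ℝ] ℝ := fun p q s =>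
    (Finsupp.lapply ((p, q), s)).comp (((B.tensorProduct B).tensorProduct B).repr.toLinearMap)
    with hpsdef
  have hps : ∀ (p q s : Fin 6) (x y z : L),
      ψ p q s ((x ⊗ₜ[ℝ] y) ⊗ₜ[ℝ] z) = B.repr x p * B.repr y q * B.repr z s := by
    intro p q s x y z
    simp only [hpsdef, LinearMap.coe_comp, Function.comp_apply, LinearEquiv.coe_coe,
      Finsupp.lapply_apply, Module.Basis.tensorProduct_repr_tmul_apply, smul_eq_mul]
    ring
  -- repr of letters
  have hrD : ∀ p, B.repr D p = if 0 = p then 1 else 0 := fun p => by rw [← hB0]; exact hrep 0 p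
  have hrH : ∀ p, B.repr H p = if 1 = p then 1 else 0 := fun p => by rw [← hB1]; exact hrep 1 p
  have hrP : ∀ p, B.repr P p = if 2 = p then 1 else 0 := fun p => by rw [← hB2]; exact hrep 2 p
  have hrK : ∀ p, B.repr K p = if 3 = p then 1 else 0 := fun p => by rw [← hB3]; exact hrep 3 p
  have hrC : ∀ p, B.repr C p = if 4 = p then 1 else 0 := fun p => by rw [← hB4]; exact hrep 4 p
  have hrM : ∀ p, B.repr M p = if 5 = p then 1 else 0 := fun p => by rw [← hB5]; exact hrep 5 p
  -- bracket tables
  have hDM : ⁅D, M⁆ = 0 := by rw [← lie_skew, hM, neg_zero]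
  have k0 : ⁅K, B 0⁆ = -B 3 := by rw [hB0, hB3, ← lie_skew, hDK]
  have k1 : ⁅K, B 1⁆ = B 2 := by rw [hB1, hB2, hKH]
  have k2 : ⁅K, B 2⁆ = B 5 := by rw [hB2, hB5, hKP]
  have k3 : ⁅K, B 3⁆ = 0 := by rw [hB3, lie_self]
  have k4 : ⁅K, B 4⁆ = 0 := by rw [hB4, hKC]
  have k5 : ⁅K, B 5⁆ = 0 := by rw [hB5, ← lie_skew, hM, neg_zero]
  have g0 : ⁅H, B 0⁆ = (2:ℝ) • B 1 := by
    rw [hB0, hB1, ← lie_skew, hDH]; module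
  have g1 : ⁅H, B 1⁆ = 0 := by rw [hB1, lie_self]
  have g2 : ⁅H, B 2⁆ = 0 := by rw [hB2, ← lie_skew, hPH, neg_zero]
  have g3 : ⁅H, B 3⁆ = -B 2 := by rw [hB3, hB2, ← lie_skew, hKH]
  have g4 : ⁅H, B 4⁆ = B 0 := by rw [hB4, hB0, hHC]
  have g5 : ⁅H, B 5⁆ = 0 := by rw [hB5, ← lie_skew, hM, neg_zero]
  have ccD : ⁅C, D⁆ = -((2:ℝ) • C) := by rw [← lie_skew, hDC]
  have ccH : ⁅C, H⁆ = -D := by rw [← lie_skew, hHC]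
  have ccP : ⁅C, P⁆ = K := by rw [← lie_skew, hPC, neg_neg]
  have ccK : ⁅C, K⁆ = 0 := by rw [← lie_skew, hKC, neg_zero]
  have ccM : ⁅C, M⁆ = 0 := by rw [← lie_skew, hM, neg_zero]
  -- delta(M) = 0, hence al = 0
  have hadM : LieAlgebra.ad ℝ L M = 0 := by
    ext x; simp [LieAlgebra.ad_apply, hM]
  have hdM0 : cobdry L r M = 0 := by
    rw [hcob]
    simp [act, hadM, LinearMap.rTensor_zero, LinearMap.lTensor_zero]
  have hal : al = 0 := by
    have h := congrArg (φ 2 5) (hdM.symm.trans hdM0)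
    simp only [map_sum, map_smul, map_add, map_sub, map_neg, map_zero, Fin.sum_univ_six,
      neg_tmul, tmul_neg, zero_tmul, tmul_zero, ← smul_tmul', tmul_smul, wedge,
      Finsupp.smul_apply, Finsupp.neg_apply, Finsupp.coe_zero, Pi.zero_apply, hph, hrep, hrD, hrH, hrP, hrK, hrC, hrM, smul_eq_mul, Fin.reduceEq, reduceIte,
      if_true, if_false, mul_zero, zero_mul, mul_one, one_mul, add_zero, zero_add,
      neg_zero, sub_zero, zero_sub, neg_neg, mul_neg, neg_mul, sub_self] at h
    linarith [h]
  subst hal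
  have eK12 := congrArg (φ 1 2) ((hact K).symm.trans hdK)
  simp only [k0, k1, k2, k3, k4, k5, map_sum, map_smul, map_add, map_sub, map_neg, map_zero, Fin.sum_univ_six,
      neg_tmul, tmul_neg, zero_tmul, tmul_zero, ← smul_tmul', tmul_smul, wedge,
      Finsupp.smul_apply, Finsupp.neg_apply, Finsupp.coe_zero, Pi.zero_apply, hph, hrep, hrD, hrH, hrP, hrK, hrC, hrM, smul_eq_mul, Fin.reduceEq, reduceIte,
      if_true, if_false, mul_zero, zero_mul, mul_one, one_mul, add_zero, zero_add,
      neg_zero, sub_zero, zero_sub, neg_neg, mul_neg, neg_mul, sub_self] at eK12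
  have hnu : nu = 0 := by linarith [eK12, hskew 1 1]
  subst hnu
  have eH35 := congrArg (φ 3 5) ((hact H).symm.trans hdH)
  simp only [g0, g1, g2, g3, g4, g5, map_sum, map_smul, map_add, map_sub, map_neg, map_zero, Fin.sum_univ_six,
      neg_tmul, tmul_neg, zero_tmul, tmul_zero, ← smul_tmul', tmul_smul, wedge,
      Finsupp.smul_apply, Finsupp.neg_apply, Finsupp.coe_zero, Pi.zero_apply, hph, hrep, hrD, hrH, hrP, hrK, hrC, hrM, smul_eq_mul, Fin.reduceEq, reduceIte,
      if_true, if_false, mul_zero, zero_mul, mul_one, one_mul, add_zero, zero_add,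
      neg_zero, sub_zero, zero_sub, neg_neg, mul_neg, neg_mul, sub_self] at eH35
  have hbe5 : be5 = 0 := by linarith [eH35]
  subst hbe5
  simp only [zero_smul, add_zero, zero_add, sub_zero, smul_zero, zero_sub] at hdK hdH hdP
  -- co-Jacobi at K gives be6 = 0
  have hcjK := hbi.2.2 K
  rw [hdK] at hcjK
  have h6 := congrArg (ψ 1 3 5) hcjK
  simp only [map_add, map_sub, map_smul, map_neg, map_zero, LinearMap.add_apply,
      LinearMap.id_apply, LinearMap.coe_comp, Function.comp_apply, zeta,
      LinearEquiv.coe_coe, TensorProduct.comm_tmul, TensorProduct.assoc_symm_tmul,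
      LinearMap.rTensor_tmul, hdK, hdH, hdP, hdM0, wedge, tmul_add, add_tmul,
      tmul_sub, sub_tmul, ← smul_tmul', tmul_smul, zero_tmul, tmul_zero, neg_tmul,
      tmul_neg, Finsupp.smul_apply, Finsupp.neg_apply, Finsupp.coe_zero, Pi.zero_apply, hps, hrD, hrH, hrP, hrK, hrC, hrM, smul_eq_mul, Fin.reduceEq, reduceIte,
      mul_zero, zero_mul, mul_one, one_mul, add_zero, zero_add, neg_zero, sub_zero,
      zero_sub, neg_neg, mul_neg, neg_mul] at h6
  have hbe6 : be6 = 0 := by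
    have h : be6 * be6 = 0 := by linear_combination h6
    exact mul_self_eq_zero.mp h
  subst hbe6
  simp only [zero_smul, add_zero, zero_add, sub_zero, smul_zero, zero_sub, neg_zero] at hdK hdH hdP
  have eK02 := congrArg (φ 0 2) ((hact K).symm.trans hdK)
  simp only [k0, k1, k2, k3, k4, k5, map_sum, map_smul, map_add, map_sub, map_neg, map_zero, Fin.sum_univ_six,
      neg_tmul, tmul_neg, zero_tmul, tmul_zero, ← smul_tmul', tmul_smul, wedge,
      Finsupp.smul_apply, Finsupp.neg_apply, Finsupp.coe_zero, Pi.zero_apply, hph, hrep, hrD, hrH, hrP, hrK, hrC, hrM, smul_eq_mul, Fin.reduceEq, reduceIte,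
      if_true, if_false, mul_zero, zero_mul, mul_one, one_mul, add_zero, zero_add,
      neg_zero, sub_zero, zero_sub, neg_neg, mul_neg, neg_mul, sub_self] at eK02
  have hc01 : c 0 1 = 0 := by linarith [eK02]
  have eK05 := congrArg (φ 0 5) ((hact K).symm.trans hdK)
  simp only [k0, k1, k2, k3, k4, k5, map_sum, map_smul, map_add, map_sub, map_neg, map_zero, Fin.sum_univ_six,
      neg_tmul, tmul_neg, zero_tmul, tmul_zero, ← smul_tmul', tmul_smul, wedge,
      Finsupp.smul_apply, Finsupp.neg_apply, Finsupp.coe_zero, Pi.zero_apply, hph, hrep, hrD, hrH, hrP, hrK, hrC, hrM, smul_eq_mul, Fin.reduceEq, reduceIte,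
      if_true, if_false, mul_zero, zero_mul, mul_one, one_mul, add_zero, zero_add,
      neg_zero, sub_zero, zero_sub, neg_neg, mul_neg, neg_mul, sub_self] at eK05
  have hc02 : c 0 2 = 0 := by linarith [eK05]
  have eH13 := congrArg (φ 1 3) ((hact H).symm.trans hdH)
  simp only [g0, g1, g2, g3, g4, g5, map_sum, map_smul, map_add, map_sub, map_neg, map_zero, Fin.sum_univ_six,
      neg_tmul, tmul_neg, zero_tmul, tmul_zero, ← smul_tmul', tmul_smul, wedge,
      Finsupp.smul_apply, Finsupp.neg_apply, Finsupp.coe_zero, Pi.zero_apply, hph, hrep, hrD, hrH, hrP, hrK, hrC, hrM, smul_eq_mul, Fin.reduceEq, reduceIte,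
      if_true, if_false, mul_zero, zero_mul, mul_one, one_mul, add_zero, zero_add,
      neg_zero, sub_zero, zero_sub, neg_neg, mul_neg, neg_mul, sub_self] at eH13
  have hc03 : c 0 3 = 0 := by linarith [eH13]
  have eK34 := congrArg (φ 3 4) ((hact K).symm.trans hdK)
  simp only [k0, k1, k2, k3, k4, k5, map_sum, map_smul, map_add, map_sub, map_neg, map_zero, Fin.sum_univ_six,
      neg_tmul, tmul_neg, zero_tmul, tmul_zero, ← smul_tmul', tmul_smul, wedge,
      Finsupp.smul_apply, Finsupp.neg_apply, Finsupp.coe_zero, Pi.zero_apply, hph, hrep, hrD, hrH, hrP, hrK, hrC, hrM, smul_eq_mul, Fin.reduceEq, reduceIte,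
      if_true, if_false, mul_zero, zero_mul, mul_one, one_mul, add_zero, zero_add,
      neg_zero, sub_zero, zero_sub, neg_neg, mul_neg, neg_mul, sub_self] at eK34
  have hc04 : c 0 4 = 0 := by linarith [eK34]
  have eH15 := congrArg (φ 1 5) ((hact H).symm.trans hdH)
  simp only [g0, g1, g2, g3, g4, g5, map_sum, map_smul, map_add, map_sub, map_neg, map_zero, Fin.sum_univ_six,
      neg_tmul, tmul_neg, zero_tmul, tmul_zero, ← smul_tmul', tmul_smul, wedge,
      Finsupp.smul_apply, Finsupp.neg_apply, Finsupp.coe_zero, Pi.zero_apply, hph, hrep, hrD, hrH, hrP, hrK, hrC, hrM, smul_eq_mul, Fin.reduceEq, reduceIte,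
      if_true, if_false, mul_zero, zero_mul, mul_one, one_mul, add_zero, zero_add,
      neg_zero, sub_zero, zero_sub, neg_neg, mul_neg, neg_mul, sub_self] at eH15
  have hc05 : c 0 5 = (be4 - xi)/2 := by linarith [eH15]
  have eK15 := congrArg (φ 1 5) ((hact K).symm.trans hdK)
  simp only [k0, k1, k2, k3, k4, k5, map_sum, map_smul, map_add, map_sub, map_neg, map_zero, Fin.sum_univ_six,
      neg_tmul, tmul_neg, zero_tmul, tmul_zero, ← smul_tmul', tmul_smul, wedge,
      Finsupp.smul_apply, Finsupp.neg_apply, Finsupp.coe_zero, Pi.zero_apply, hph, hrep, hrD, hrH, hrP, hrK, hrC, hrM, smul_eq_mul, Fin.reduceEq, reduceIte,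
      if_true, if_false, mul_zero, zero_mul, mul_one, one_mul, add_zero, zero_add,
      neg_zero, sub_zero, zero_sub, neg_neg, mul_neg, neg_mul, sub_self] at eK15
  have hc12 : c 1 2 = be2 := by linarith [eK15]
  have eK23 := congrArg (φ 2 3) ((hact K).symm.trans hdK)
  simp only [k0, k1, k2, k3, k4, k5, map_sum, map_smul, map_add, map_sub, map_neg, map_zero, Fin.sum_univ_six,
      neg_tmul, tmul_neg, zero_tmul, tmul_zero, ← smul_tmul', tmul_smul, wedge,
      Finsupp.smul_apply, Finsupp.neg_apply, Finsupp.coe_zero, Pi.zero_apply, hph, hrep, hrD, hrH, hrP, hrK, hrC, hrM, smul_eq_mul, Fin.reduceEq, reduceIte,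
      if_true, if_false, mul_zero, zero_mul, mul_one, one_mul, add_zero, zero_add,
      neg_zero, sub_zero, zero_sub, neg_neg, mul_neg, neg_mul, sub_self] at eK23
  have hc13 : c 1 3 = 0 := by linarith [eK23, hskew 2 0, hc02]
  have eK24 := congrArg (φ 2 4) ((hact K).symm.trans hdK)
  simp only [k0, k1, k2, k3, k4, k5, map_sum, map_smul, map_add, map_sub, map_neg, map_zero, Fin.sum_univ_six,
      neg_tmul, tmul_neg, zero_tmul, tmul_zero, ← smul_tmul', tmul_smul, wedge,
      Finsupp.smul_apply, Finsupp.neg_apply, Finsupp.coe_zero, Pi.zero_apply, hph, hrep, hrD, hrH, hrP, hrK, hrC, hrM, smul_eq_mul, Fin.reduceEq, reduceIte,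
      if_true, if_false, mul_zero, zero_mul, mul_one, one_mul, add_zero, zero_add,
      neg_zero, sub_zero, zero_sub, neg_neg, mul_neg, neg_mul, sub_self] at eK24
  have hc14 : c 1 4 = 0 := by linarith [eK24]
  have eK25 := congrArg (φ 2 5) ((hact K).symm.trans hdK)
  simp only [k0, k1, k2, k3, k4, k5, map_sum, map_smul, map_add, map_sub, map_neg, map_zero, Fin.sum_univ_six,
      neg_tmul, tmul_neg, zero_tmul, tmul_zero, ← smul_tmul', tmul_smul, wedge,
      Finsupp.smul_apply, Finsupp.neg_apply, Finsupp.coe_zero, Pi.zero_apply, hph, hrep, hrD, hrH, hrP, hrK, hrC, hrM, smul_eq_mul, Fin.reduceEq, reduceIte,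
      if_true, if_false, mul_zero, zero_mul, mul_one, one_mul, add_zero, zero_add,
      neg_zero, sub_zero, zero_sub, neg_neg, mul_neg, neg_mul, sub_self] at eK25
  have hc15 : c 1 5 = be1 := by linarith [eK25, hskew 2 2]
  have eK35 := congrArg (φ 3 5) ((hact K).symm.trans hdK)
  simp only [k0, k1, k2, k3, k4, k5, map_sum, map_smul, map_add, map_sub, map_neg, map_zero, Fin.sum_univ_six,
      neg_tmul, tmul_neg, zero_tmul, tmul_zero, ← smul_tmul', tmul_smul, wedge,
      Finsupp.smul_apply, Finsupp.neg_apply, Finsupp.coe_zero, Pi.zero_apply, hph, hrep, hrD, hrH, hrP, hrK, hrC, hrM, smul_eq_mul, Fin.reduceEq, reduceIte,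
      if_true, if_false, mul_zero, zero_mul, mul_one, one_mul, add_zero, zero_add,
      neg_zero, sub_zero, zero_sub, neg_neg, mul_neg, neg_mul, sub_self] at eK35
  have hc23 : c 2 3 = -((be4 + xi)/2) := by linarith [eK35, hskew 3 2, hc05]
  have eK45 := congrArg (φ 4 5) ((hact K).symm.trans hdK)
  simp only [k0, k1, k2, k3, k4, k5, map_sum, map_smul, map_add, map_sub, map_neg, map_zero, Fin.sum_univ_six,
      neg_tmul, tmul_neg, zero_tmul, tmul_zero, ← smul_tmul', tmul_smul, wedge,
      Finsupp.smul_apply, Finsupp.neg_apply, Finsupp.coe_zero, Pi.zero_apply, hph, hrep, hrD, hrH, hrP, hrK, hrC, hrM, smul_eq_mul, Fin.reduceEq, reduceIte,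
      if_true, if_false, mul_zero, zero_mul, mul_one, one_mul, add_zero, zero_add,
      neg_zero, sub_zero, zero_sub, neg_neg, mul_neg, neg_mul, sub_self] at eK45
  have hc24 : c 2 4 = 0 := by linarith [eK45, hskew 4 2]
  have eH24 := congrArg (φ 2 4) ((hact H).symm.trans hdH)
  simp only [g0, g1, g2, g3, g4, g5, map_sum, map_smul, map_add, map_sub, map_neg, map_zero, Fin.sum_univ_six,
      neg_tmul, tmul_neg, zero_tmul, tmul_zero, ← smul_tmul', tmul_smul, wedge,
      Finsupp.smul_apply, Finsupp.neg_apply, Finsupp.coe_zero, Pi.zero_apply, hph, hrep, hrD, hrH, hrP, hrK, hrC, hrM, smul_eq_mul, Fin.reduceEq, reduceIte,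
      if_true, if_false, mul_zero, zero_mul, mul_one, one_mul, add_zero, zero_add,
      neg_zero, sub_zero, zero_sub, neg_neg, mul_neg, neg_mul, sub_self] at eH24
  have hc34 : c 3 4 = 0 := by linarith [eH24]
  have eH25 := congrArg (φ 2 5) ((hact H).symm.trans hdH)
  simp only [g0, g1, g2, g3, g4, g5, map_sum, map_smul, map_add, map_sub, map_neg, map_zero, Fin.sum_univ_six,
      neg_tmul, tmul_neg, zero_tmul, tmul_zero, ← smul_tmul', tmul_smul, wedge,
      Finsupp.smul_apply, Finsupp.neg_apply, Finsupp.coe_zero, Pi.zero_apply, hph, hrep, hrD, hrH, hrP, hrK, hrC, hrM, smul_eq_mul, Fin.reduceEq, reduceIte,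
      if_true, if_false, mul_zero, zero_mul, mul_one, one_mul, add_zero, zero_add,
      neg_zero, sub_zero, zero_sub, neg_neg, mul_neg, neg_mul, sub_self] at eH25
  have hc35 : c 3 5 = -be3 := by linarith [eH25]
  have eH05 := congrArg (φ 0 5) ((hact H).symm.trans hdH)
  simp only [g0, g1, g2, g3, g4, g5, map_sum, map_smul, map_add, map_sub, map_neg, map_zero, Fin.sum_univ_six,
      neg_tmul, tmul_neg, zero_tmul, tmul_zero, ← smul_tmul', tmul_smul, wedge,
      Finsupp.smul_apply, Finsupp.neg_apply, Finsupp.coe_zero, Pi.zero_apply, hph, hrep, hrD, hrH, hrP, hrK, hrC, hrM, smul_eq_mul, Fin.reduceEq, reduceIte,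
      if_true, if_false, mul_zero, zero_mul, mul_one, one_mul, add_zero, zero_add,
      neg_zero, sub_zero, zero_sub, neg_neg, mul_neg, neg_mul, sub_self] at eH05
  have hc45 : c 4 5 = 0 := by linarith [eH05]
  have mm00 : c 0 0 = 0 := by linarith [hskew 0 0]
  have mm01 : c 0 1 = 0 := hc01
  have mm02 : c 0 2 = 0 := hc02
  have mm03 : c 0 3 = 0 := hc03
  have mm04 : c 0 4 = 0 := hc04
  have mm05 : c 0 5 = (be4 - xi)/2 := hc05
  have mm10 : c 1 0 = -(0) := by linarith [hskew 1 0, hc01]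
  have mm11 : c 1 1 = 0 := by linarith [hskew 1 1]
  have mm12 : c 1 2 = be2 := hc12
  have mm13 : c 1 3 = 0 := hc13
  have mm14 : c 1 4 = 0 := hc14
  have mm15 : c 1 5 = be1 := hc15
  have mm20 : c 2 0 = -(0) := by linarith [hskew 2 0, hc02]
  have mm21 : c 2 1 = -(be2) := by linarith [hskew 2 1, hc12]
  have mm22 : c 2 2 = 0 := by linarith [hskew 2 2]
  have mm23 : c 2 3 = -((be4 + xi)/2) := hc23
  have mm24 : c 2 4 = 0 := hc24
  have mm30 : c 3 0 = -(0) := by linarith [hskew 3 0, hc03]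
  have mm31 : c 3 1 = -(0) := by linarith [hskew 3 1, hc13]
  have mm32 : c 3 2 = -(-((be4 + xi)/2)) := by linarith [hskew 3 2, hc23]
  have mm33 : c 3 3 = 0 := by linarith [hskew 3 3]
  have mm34 : c 3 4 = 0 := hc34
  have mm35 : c 3 5 = -be3 := hc35
  have mm40 : c 4 0 = -(0) := by linarith [hskew 4 0, hc04]
  have mm41 : c 4 1 = -(0) := by linarith [hskew 4 1, hc14]
  have mm42 : c 4 2 = -(0) := by linarith [hskew 4 2, hc24]
  have mm43 : c 4 3 = -(0) := by linarith [hskew 4 3, hc34]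
  have mm44 : c 4 4 = 0 := by linarith [hskew 4 4]
  have mm45 : c 4 5 = 0 := hc45
  have mm50 : c 5 0 = -((be4 - xi)/2) := by linarith [hskew 5 0, hc05]
  have mm51 : c 5 1 = -(be1) := by linarith [hskew 5 1, hc15]
  have mm52 : c 5 2 = -(c 2 5) := by linarith [hskew 5 2]
  have mm53 : c 5 3 = -(-be3) := by linarith [hskew 5 3, hc35]
  have mm54 : c 5 4 = -(0) := by linarith [hskew 5 4, hc45]
  have mm55 : c 5 5 = 0 := by linarith [hskew 5 5]
  -- explicit form of r
  have hr2 : r = ((be4 - xi)/2) • wedge L D M + be2 • wedge L H P + be1 • wedge L H M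
      + (-((be4 + xi)/2)) • wedge L P K + (c 2 5) • wedge L P M + (-be3) • wedge L K M := by
    rw [hr]
    simp only [Fin.sum_univ_six, mm00, mm01, mm02, mm03, mm04, mm05, mm10, mm11, mm12, mm13, mm14, mm15, mm20, mm21, mm22, mm23, mm24, mm30, mm31, mm32, mm33, mm34, mm35, mm40, mm41, mm42, mm43, mm44, mm45, mm50, mm51, mm52, mm53, mm54, mm55]
    simp only [hB0, hB1, hB2, hB3, hB4, hB5, wedge]
    module
  -- delta(D) and delta(C)
  have hdD : cobdry L r D = (-(3*be2)) • wedge L H P + (-(2*be1)) • wedge L H M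
      + (-(c 2 5)) • wedge L P M + (-be3) • wedge L K M := by
    rw [hcob, hr2]
    simp only [map_add, map_smul, wedge, map_sub, act, LinearMap.add_apply,
      LinearMap.rTensor_tmul, LinearMap.lTensor_tmul, LieAlgebra.ad_apply, lie_self,
      hDM, hDH, hDP, hDK, hDC, neg_tmul, tmul_neg, zero_tmul, tmul_zero,
      ← smul_tmul', tmul_smul, sub_tmul, tmul_sub]
    module
  have hdC : cobdry L r C = (-be2) • wedge L D P + (-be1) • wedge L D M + be2 • wedge L H K
      + (c 2 5) • wedge L K M + (xi - be4) • wedge L C M := by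
    rw [hcob, hr2]
    simp only [map_add, map_smul, wedge, map_sub, act, LinearMap.add_apply,
      LinearMap.rTensor_tmul, LinearMap.lTensor_tmul, LieAlgebra.ad_apply, lie_self,
      ccD, ccH, ccP, ccK, ccM, neg_tmul, tmul_neg, zero_tmul, tmul_zero,
      ← smul_tmul', tmul_smul, sub_tmul, tmul_sub]
    module
  -- co-Jacobi at C
  have hcjC := hbi.2.2 C
  rw [hdC] at hcjC
  have h7 := congrArg (ψ 0 2 5) hcjC
  simp only [hdD, hdC, map_add, map_sub, map_smul, map_neg, map_zero, LinearMap.add_apply,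
      LinearMap.id_apply, LinearMap.coe_comp, Function.comp_apply, zeta,
      LinearEquiv.coe_coe, TensorProduct.comm_tmul, TensorProduct.assoc_symm_tmul,
      LinearMap.rTensor_tmul, hdK, hdH, hdP, hdM0, wedge, tmul_add, add_tmul,
      tmul_sub, sub_tmul, ← smul_tmul', tmul_smul, zero_tmul, tmul_zero, neg_tmul,
      tmul_neg, Finsupp.smul_apply, Finsupp.neg_apply, Finsupp.coe_zero, Pi.zero_apply, hps, hrD, hrH, hrP, hrK, hrC, hrM, smul_eq_mul, Fin.reduceEq, reduceIte,
      mul_zero, zero_mul, mul_one, one_mul, add_zero, zero_add, neg_zero, sub_zero,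
      zero_sub, neg_neg, mul_neg, neg_mul] at h7
  refine ⟨rfl, rfl, rfl, rfl, ?_⟩
  linear_combination h7
end
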